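/- arXiv:1309.3145 — 4 statements merged into one kernel-verified Lean document; each statement's English description precedes it below -/
import Mathlib

section
/- Let $T$ be a bounded positive linear operator on $L^p$ with eventual strong positivity and such that $T^n$ is compact for some $n \ge 1$ and $r(T) > 0$. Then any two eigenfunctions of $T$ that are non-negative a.e. and nonzero are scalar multiples of each other (i.e., the non-negative eigenfunction is unique up to scale). -/
open MeasureTheory Filter Set
open scoped ENNReal Topology

namespace Stmt1Aux
set_option synthInstance.maxHeartbeats 1000000
set_option maxHeartbeats 1600000

variable {X : Type*} [MeasurableSpace X] {μ : Measure X} {p : ℝ≥0∞} [Fact (1 ≤ p)]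

/-- Dominated convergence for `Lp` norms. -/
lemma myDCT (hp : p ≠ ∞) (w : ℕ → Lp ℝ p μ) (G : Lp ℝ p μ)
    (hdom : ∀ j, ∀ᵐ x ∂μ, |w j x| ≤ |G x|)
    (hae : ∀ᵐ x ∂μ, Tendsto (fun j => w j x) atTop (𝓝 0)) :
    Tendsto (fun j => ‖w j‖) atTop (𝓝 0) := by
  have hp0 : p ≠ 0 := by
    have h1 : (1 : ℝ≥0∞) ≤ p := Fact.out
    intro h; rw [h] at h1; simp at h1
  have hpt : 0 < p.toReal := ENNReal.toReal_pos hp0 hp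
  set q := p.toReal with hq
  have key : Tendsto (fun j => ∫⁻ x, (‖(w j : X → ℝ) x‖₊ : ℝ≥0∞) ^ q ∂μ) atTop
      (𝓝 (∫⁻ _x, (0:ℝ≥0∞) ∂μ)) := by
    refine tendsto_lintegral_of_dominated_convergence' (fun x => (‖G x‖₊ : ℝ≥0∞) ^ q)
      (fun j => ?_) (fun j => ?_) ?_ ?_
    · exact ((Lp.aestronglyMeasurable (w j)).enorm).pow_const q
    · filter_upwards [hdom j] with x hx
      refine ENNReal.rpow_le_rpow ?_ hpt.le
      exact_mod_cast HasSolidNorm.solid hx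
    · have hG : eLpNorm (⇑G) p μ < ∞ := Lp.eLpNorm_lt_top G
      rw [eLpNorm_eq_eLpNorm' hp0 hp] at hG
      exact (lintegral_rpow_enorm_lt_top_of_eLpNorm'_lt_top hpt hG).ne
    · filter_upwards [hae] with x hx
      have h0 : Tendsto (fun j => (‖(w j : X → ℝ) x‖₊ : ℝ≥0∞)) atTop (𝓝 0) := by
        rw [← ENNReal.coe_zero, ENNReal.tendsto_coe]
        simpa using hx.nnnorm
      have := ((ENNReal.continuous_rpow_const (y := q)).tendsto (0:ℝ≥0∞)).comp h0
      simpa [Function.comp_def, ENNReal.zero_rpow_of_pos hpt] using this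
  rw [lintegral_zero] at key
  have key2 : Tendsto (fun j => eLpNorm (⇑(w j)) p μ) atTop (𝓝 0) := by
    have : ∀ j, eLpNorm (⇑(w j)) p μ
        = (∫⁻ x, (‖(w j : X → ℝ) x‖₊ : ℝ≥0∞) ^ q ∂μ) ^ (1/q) := fun j =>
      eLpNorm_eq_lintegral_rpow_enorm_toReal hp0 hp
    rw [funext this]
    have cont := (ENNReal.continuous_rpow_const (y := 1/q)).tendsto (0:ℝ≥0∞)
    have h2 := cont.comp key
    have h00 : ((0:ℝ≥0∞)) ^ (1/q) = 0 := ENNReal.zero_rpow_of_pos (by positivity)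
    rw [h00] at h2
    exact h2
  simp_rw [Lp.norm_def]
  have := (ENNReal.tendsto_toReal (ENNReal.zero_ne_top)).comp key2
  simpa [Function.comp_def] using this

/-- solid norm via a.e. comparison -/
lemma norm_le_of_ae_abs_le {u v : Lp ℝ p μ} (h : ∀ᵐ x ∂μ, |u x| ≤ |v x|) : ‖u‖ ≤ ‖v‖ := by
  refine HasSolidNorm.solid ?_
  rw [← Lp.coeFn_le]
  filter_upwards [h, Lp.coeFn_abs u, Lp.coeFn_abs v] with x hx h1 h2
  rw [h1, h2]; exact hx

variable (T : Lp ℝ p μ →L[ℝ] Lp ℝ p μ)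

/-- positivity implies monotonicity (a.e. version) -/
lemma Tmono (hpos : ∀ f : Lp ℝ p μ, 0 ≤ᵐ[μ] ⇑f → 0 ≤ᵐ[μ] ⇑(T f))
    {u v : Lp ℝ p μ} (h : ∀ᵐ x ∂μ, u x ≤ v x) : ∀ᵐ x ∂μ, (T u) x ≤ (T v) x := by
  have h0 : 0 ≤ᵐ[μ] ⇑(v - u) := by
    filter_upwards [Lp.coeFn_sub v u, h] with x h1 h2
    simp only [h1, Pi.sub_apply, Pi.zero_apply]; linarith
  have h2 := hpos _ h0
  have hsub : ⇑(T (v - u)) =ᵐ[μ] ⇑(T v - T u) := by rw [map_sub]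
  filter_upwards [h2, hsub, Lp.coeFn_sub (T v) (T u)] with x h3 h4 h5
  have := h4 ▸ h3
  rw [h5] at h4
  simp only [Pi.zero_apply] at h3
  rw [h4] at h3
  simp only [Pi.sub_apply] at h3
  linarith

lemma Tpow_mono (hpos : ∀ f : Lp ℝ p μ, 0 ≤ᵐ[μ] ⇑f → 0 ≤ᵐ[μ] ⇑(T f)) (m : ℕ)
    {u v : Lp ℝ p μ} (h : ∀ᵐ x ∂μ, u x ≤ v x) : ∀ᵐ x ∂μ, ((T^m) u) x ≤ ((T^m) v) x := by
  induction m generalizing u v with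
  | zero => simpa using h
  | succ m ih =>
      have h1 := Tmono T hpos h
      have e1 : (T^(m+1)) u = (T^m) (T u) := by rw [pow_succ]; rfl
      have e2 : (T^(m+1)) v = (T^m) (T v) := by rw [pow_succ]; rfl
      rw [e1, e2]
      exact ih h1


lemma Tpow_nonneg (hpos : ∀ f : Lp ℝ p μ, 0 ≤ᵐ[μ] ⇑f → 0 ≤ᵐ[μ] ⇑(T f)) (m : ℕ)
    {u : Lp ℝ p μ} (h : ∀ᵐ x ∂μ, 0 ≤ u x) : ∀ᵐ x ∂μ, 0 ≤ ((T^m) u) x := by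
  have h0 : ∀ᵐ x ∂μ, ((0 : Lp ℝ p μ) : X → ℝ) x ≤ u x := by
    filter_upwards [h, Lp.coeFn_zero ℝ p μ] with x h1 h2
    rw [h2]; exact h1
  have := Tpow_mono T hpos m h0
  have hz : (T^m) (0 : Lp ℝ p μ) = 0 := map_zero _
  rw [hz] at this
  filter_upwards [this, Lp.coeFn_zero ℝ p μ] with x h1 h2
  rw [h2] at h1; exact h1

/-- iterate a pointwise super-eigenvalue inequality -/
lemma Tpow_super (hpos : ∀ f : Lp ℝ p μ, 0 ≤ᵐ[μ] ⇑f → 0 ≤ᵐ[μ] ⇑(T f))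
    {c : ℝ} (hc : 0 ≤ c) {u : Lp ℝ p μ} (h : ∀ᵐ x ∂μ, c * u x ≤ (T u) x) (m : ℕ) :
    ∀ᵐ x ∂μ, c^m * u x ≤ ((T^m) u) x := by
  induction m with
  | zero => simp
  | succ m ih =>
      -- (T^(m+1)) u = T ((T^m) u)
      have e1 : (T^(m+1)) u = T ((T^m) u) := by rw [pow_succ']; rfl
      rw [e1]
      -- from ih : c^m • u ≤ T^m u, apply Tmono
      have hsm : ∀ᵐ x ∂μ, (c^m • u) x ≤ ((T^m) u) x := by
        filter_upwards [ih, Lp.coeFn_smul (c^m) u] with x h1 h2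
        rw [h2]; simpa using h1
      have h2 := Tmono T hpos hsm
      have e2 : T (c^m • u) = c^m • T u := map_smul T _ _
      rw [e2] at h2
      filter_upwards [h2, h, Lp.coeFn_smul (c^m) (T u)] with x h3 h4 h5
      rw [h5] at h3
      simp only [Pi.smul_apply, smul_eq_mul] at h3
      calc c^(m+1) * u x = c^m * (c * u x) := by ring
        _ ≤ c^m * (T u) x := mul_le_mul_of_nonneg_left h4 (pow_nonneg hc m)
        _ ≤ (T ((T^m) u)) x := h3


lemma eig_pow {u : Lp ℝ p μ} {c : ℝ} (h : T u = c • u) (m : ℕ) : (T^m) u = c^m • u := by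
  induction m with
  | zero => simp
  | succ m ih =>
      have e1 : (T^(m+1)) u = T ((T^m) u) := by rw [pow_succ']; rfl
      rw [e1, ih, _root_.map_smul, h, smul_smul, pow_succ', mul_comm]

lemma mu_ne_zero {u : Lp ℝ p μ} (hu : u ≠ 0) : (ae μ).NeBot := by
  rw [ae_neBot]
  intro h
  apply hu
  subst h
  exact Lp.ext (by simp [Filter.EventuallyEq, ae_zero])

lemma eig_pos (hpos : ∀ f : Lp ℝ p μ, 0 ≤ᵐ[μ] ⇑f → 0 ≤ᵐ[μ] ⇑(T f))
    (hesp : ∀ f : Lp ℝ p μ, 0 ≤ᵐ[μ] ⇑f → f ≠ 0 →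
      ∃ n : ℕ, 1 ≤ n ∧ ∀ᵐ x ∂μ, 0 < ((T ^ n) f : Lp ℝ p μ) x)
    {f : Lp ℝ p μ} {a : ℝ} (hf0 : 0 ≤ᵐ[μ] ⇑f) (hfne : f ≠ 0) (hfeig : T f = a • f) :
    0 < a ∧ ∀ᵐ x ∂μ, 0 < f x := by
  obtain ⟨m, hm1, hmpos⟩ := hesp f hf0 hfne
  rw [eig_pow T hfeig m] at hmpos
  have h1 : ∀ᵐ x ∂μ, 0 < a^m * f x := by
    filter_upwards [hmpos, Lp.coeFn_smul (a^m) f] with x hx h2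
    rw [h2] at hx; simpa using hx
  have hTf : ∀ᵐ x ∂μ, 0 ≤ a * f x := by
    have := hpos f hf0
    rw [hfeig] at this
    filter_upwards [this, Lp.coeFn_smul a f] with x hx h2
    rw [h2] at hx; simpa using hx
  have : (ae μ).NeBot := mu_ne_zero hfne
  obtain ⟨x, ⟨hx1, hx2⟩, hx3⟩ := ((h1.and hf0).and hTf).exists
  simp only [Pi.zero_apply] at hx2
  have hfx : 0 < f x := by
    rcases lt_or_eq_of_le hx2 with h | h
    · exact h
    · exfalso; rw [← h] at hx1; simp at hx1
  have ham : 0 < a^m := by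
    by_contra hcon
    push_neg at hcon
    nlinarith
  have ha : 0 < a := by
    have ha0 : 0 ≤ a := by nlinarith
    rcases lt_or_eq_of_le ha0 with h | h
    · exact h
    · exfalso
      rw [← h, zero_pow (by omega : m ≠ 0)] at ham
      exact lt_irrefl 0 ham
  refine ⟨ha, ?_⟩
  filter_upwards [h1] with x hx
  have := pow_pos ha m
  nlinarith


/-- Core compactness argument: there is no normalized nonnegative sequence that is
uniformly super-eigen for `T^n` and tends to `0` almost everywhere. -/
lemma no_seq (hp : p ≠ ∞)
    (hpos : ∀ f : Lp ℝ p μ, 0 ≤ᵐ[μ] ⇑f → 0 ≤ᵐ[μ] ⇑(T f))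
    {n : ℕ} (hcompact : IsCompactOperator ⇑(T ^ n))
    {c : ℝ} (hc : 0 < c) (v : ℕ → Lp ℝ p μ)
    (hv1 : ∀ j, ‖v j‖ = 1)
    (hv0 : ∀ j, ∀ᵐ x ∂μ, 0 ≤ v j x)
    (hvc : ∀ j, ∀ᵐ x ∂μ, c * v j x ≤ ((T ^ n) (v j)) x)
    (hvae : ∀ᵐ x ∂μ, Tendsto (fun j => v j x) atTop (𝓝 0)) : False := by
  have hp0 : p ≠ 0 := by
    have h1 : (1 : ℝ≥0∞) ≤ p := Fact.out
    intro h; rw [h] at h1; simp at h1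
  -- extract a norm-convergent subsequence of ((T^n) (v j))
  have hcpt' : IsCompactOperator ⇑((T^n : Lp ℝ p μ →L[ℝ] Lp ℝ p μ) :
      Lp ℝ p μ →ₗ[ℝ] Lp ℝ p μ) := by exact hcompact
  have hK : IsCompact (closure ((⇑((T^n : Lp ℝ p μ →L[ℝ] Lp ℝ p μ) :
      Lp ℝ p μ →ₗ[ℝ] Lp ℝ p μ)) '' (Metric.closedBall 0 1))) :=
    hcpt'.isCompact_closure_image_of_bounded (𝕜₁ := ℝ) Metric.isBounded_closedBall
  have hmem : ∀ j, (T^n) (v j) ∈ closure ((⇑((T^n : Lp ℝ p μ →L[ℝ] Lp ℝ p μ) :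
      Lp ℝ p μ →ₗ[ℝ] Lp ℝ p μ)) '' (Metric.closedBall 0 1)) := fun j =>
    subset_closure ⟨v j, by simp [Metric.mem_closedBall, dist_zero_right, hv1 j], rfl⟩
  obtain ⟨z, _hz, φ, hφ, hconv⟩ := hK.tendsto_subseq hmem
  -- a.e. convergent sub-subsequence
  have h1 := (Lp.tendsto_Lp_iff_tendsto_eLpNorm' ((fun j => (T^n) (v j)) ∘ φ) z).mp hconv
  have h2 := tendstoInMeasure_of_tendsto_eLpNorm hp0
    (fun j => Lp.aestronglyMeasurable _) (Lp.aestronglyMeasurable z) h1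
  obtain ⟨ψ, hψ, haez⟩ := h2.exists_seq_tendsto_ae
  set θ : ℕ → ℕ := φ ∘ ψ with hθ
  have hθsm : StrictMono θ := hφ.comp hψ
  have hconvθ : Tendsto (fun j => (T^n) (v (θ j))) atTop (𝓝 z) :=
    hconv.comp hψ.tendsto_atTop
  -- z is nonnegative a.e.
  have hS0 : ∀ᵐ x ∂μ, ∀ j, 0 ≤ ((T^n) (v j)) x :=
    ae_all_iff.mpr (fun j => Tpow_nonneg T hpos n (hv0 j))
  have hz0 : ∀ᵐ x ∂μ, 0 ≤ z x := by
    filter_upwards [hS0, haez] with x h1 h2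
    exact ge_of_tendsto' h2 (fun j => h1 _)
  -- the truncated sequence m j
  set m : ℕ → Lp ℝ p μ := fun j => (c • v (θ j)) ⊓ z with hm
  -- coeFn identities, a.e. for all j
  have hids : ∀ᵐ x ∂μ, ∀ j, (m j) x = min (c * v (θ j) x) (z x) := by
    rw [ae_all_iff]
    intro j
    filter_upwards [Lp.coeFn_inf (c • v (θ j)) z, Lp.coeFn_smul c (v (θ j))] with x e1 e2
    show ((c • v (θ j)) ⊓ z : Lp ℝ p μ) x = _
    rw [e1, Pi.inf_apply, e2, Pi.smul_apply, smul_eq_mul]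
  have hv0' : ∀ᵐ x ∂μ, ∀ j, 0 ≤ v j x := ae_all_iff.mpr hv0
  -- ‖m j‖ → 0 by dominated convergence
  have hmnorm : Tendsto (fun j => ‖m j‖) atTop (𝓝 0) := by
    refine myDCT hp m z ?_ ?_
    · intro j
      filter_upwards [hids, hv0' , hz0] with x he h0 h1
      rw [he j]
      have hmin0 : 0 ≤ min (c * v (θ j) x) (z x) :=
        le_min (by have := h0 (θ j); positivity) h1
      rw [abs_of_nonneg hmin0]
      exact (min_le_right _ _).trans (le_abs_self _)
    · filter_upwards [hids, hvae, hz0] with x he hx hzx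
      have hx' : Tendsto (fun j => v (θ j) x) atTop (𝓝 0) := hx.comp hθsm.tendsto_atTop
      have h2 : Tendsto (fun j => min (c * v (θ j) x) (z x)) atTop (𝓝 (min (c * 0) (z x))) :=
        (tendsto_const_nhds.mul hx').min tendsto_const_nhds
      rw [show min (c * 0) (z x) = 0 from by rw [mul_zero]; exact min_eq_left hzx] at h2
      exact h2.congr (fun j => (he j).symm)
  -- second part of the norm bound
  have hsub : ∀ j, ‖c • v (θ j) - m j‖ ≤ ‖(T^n) (v (θ j)) - z‖ := by
    intro j
    refine norm_le_of_ae_abs_le ?_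
    filter_upwards [hids, hvc (θ j), Lp.coeFn_sub (c • v (θ j)) (m j),
      Lp.coeFn_sub ((T^n) (v (θ j))) z, Lp.coeFn_smul c (v (θ j))] with x he hAB e1 e2 e3
    rw [e1, e2]
    simp only [Pi.sub_apply]
    rw [he j, show (⇑(c • v (θ j)) : X → ℝ) x = c * v (θ j) x from by rw [e3]; simp]
    set A := c * v (θ j) x
    set B := ((T^n) (v (θ j))) x
    set C := z x
    rcases le_total A C with h | h
    · rw [min_eq_left h]
      simp only [sub_self, abs_zero]
      exact abs_nonneg _
    · rw [min_eq_right h]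
      have : A - C ≤ B - C := by have : A ≤ B := hAB; linarith
      calc |A - C| = A - C := abs_of_nonneg (by linarith)
        _ ≤ B - C := this
        _ ≤ |B - C| := le_abs_self _
  -- conclude
  have hnorm2 : Tendsto (fun j => ‖(T^n) (v (θ j)) - z‖) atTop (𝓝 0) :=
    tendsto_iff_norm_sub_tendsto_zero.mp hconvθ
  have hcle : ∀ j, c ≤ ‖m j‖ + ‖(T^n) (v (θ j)) - z‖ := by
    intro j
    have e1 : ‖c • v (θ j)‖ = c := by
      rw [norm_smul, hv1 (θ j), Real.norm_eq_abs, abs_of_nonneg hc.le, mul_one]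
    calc c = ‖c • v (θ j)‖ := e1.symm
      _ ≤ ‖m j‖ + ‖c • v (θ j) - m j‖ := norm_le_norm_add_norm_sub' _ _
      _ ≤ ‖m j‖ + ‖(T^n) (v (θ j)) - z‖ := by have := hsub j; linarith
  have := ge_of_tendsto' (by simpa using hmnorm.add hnorm2) hcle
  linarith


/-- Main helper, under the normalization `a ≤ b`. -/
lemma key (hp : p ≠ ∞)
    (hpos : ∀ f : Lp ℝ p μ, 0 ≤ᵐ[μ] ⇑f → 0 ≤ᵐ[μ] ⇑(T f))
    (hesp : ∀ f : Lp ℝ p μ, 0 ≤ᵐ[μ] ⇑f → f ≠ 0 →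
      ∃ n : ℕ, 1 ≤ n ∧ ∀ᵐ x ∂μ, 0 < ((T ^ n) f : Lp ℝ p μ) x)
    (hcpt : ∃ n : ℕ, 1 ≤ n ∧ IsCompactOperator ⇑(T ^ n))
    (f g : Lp ℝ p μ) (a b : ℝ)
    (hf0 : 0 ≤ᵐ[μ] ⇑f) (hfne : f ≠ 0) (hfeig : T f = a • f)
    (hg0 : 0 ≤ᵐ[μ] ⇑g) (hgne : g ≠ 0) (hgeig : T g = b • g)
    (hab : a ≤ b) :
    ∃ c : ℝ, g = c • f := by
  obtain ⟨ha, hfpos⟩ := eig_pos T hpos hesp hf0 hfne hfeig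
  obtain ⟨hb, hgpos⟩ := eig_pos T hpos hesp hg0 hgne hgeig
  have hf0' : ∀ᵐ x ∂μ, 0 ≤ f x := by filter_upwards [hf0] with x hx; simpa using hx
  have hg0' : ∀ᵐ x ∂μ, 0 ≤ g x := by filter_upwards [hg0] with x hx; simpa using hx
  obtain ⟨n, hn1, hcompact⟩ := hcpt
  have hμ : (ae μ).NeBot := mu_ne_zero hfne
  -- the master compactness argument
  have main : ∀ (t : ℕ → ℝ), (∀ k, 0 ≤ t k) → (∀ k, ¬ (∀ᵐ x ∂μ, g x ≤ t k * f x)) →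
      (∀ᵐ x ∂μ, ∀ᶠ k in atTop, g x ≤ t k * f x) → False := by
    intro t ht0 htne hev
    set u : ℕ → Lp ℝ p μ := fun k => (g - t k • f) ⊔ 0 with hu
    have huco : ∀ᵐ x ∂μ, ∀ k, u k x = max (g x - t k * f x) 0 := by
      rw [ae_all_iff]
      intro k
      filter_upwards [Lp.coeFn_sup (g - t k • f) 0, Lp.coeFn_sub g (t k • f),
        Lp.coeFn_smul (t k) f, Lp.coeFn_zero ℝ p μ] with x e1 e2 e3 e4
      show ((g - t k • f) ⊔ 0 : Lp ℝ p μ) x = _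
      rw [e1, Pi.sup_apply, e2, Pi.sub_apply, e3, Pi.smul_apply, smul_eq_mul, e4,
        Pi.zero_apply]
    have hune : ∀ k, u k ≠ 0 := by
      intro k hk
      apply htne k
      have h0 : ⇑(u k) =ᵐ[μ] ⇑(0 : Lp ℝ p μ) := by rw [hk]
      filter_upwards [h0, huco, Lp.coeFn_zero ℝ p μ] with x e1 e2 e3
      have : max (g x - t k * f x) 0 = 0 := by rw [← e2 k, e1, e3]; rfl
      have h4 : g x - t k * f x ≤ max (g x - t k * f x) 0 := le_max_left _ _
      rw [this] at h4
      linarith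
    have hu0 : ∀ k, ∀ᵐ x ∂μ, 0 ≤ u k x := by
      intro k
      filter_upwards [huco] with x e1
      rw [e1 k]
      exact le_max_right _ _
    -- super-eigen inequality for u k
    have husuper : ∀ k, ∀ᵐ x ∂μ, b * u k x ≤ (T (u k)) x := by
      intro k
      have hle : ∀ᵐ x ∂μ, (g - t k • f) x ≤ u k x := by
        filter_upwards [huco, Lp.coeFn_sub g (t k • f), Lp.coeFn_smul (t k) f] with x e1 e2 e3
        rw [e1 k, e2, Pi.sub_apply, e3, Pi.smul_apply, smul_eq_mul]
        exact le_max_left _ _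
      have h1 := Tmono T hpos hle
      have h2 : T (g - t k • f) = b • g - (t k * a) • f := by
        rw [map_sub, ContinuousLinearMap.map_smul, hfeig, hgeig, smul_smul]
      rw [h2] at h1
      have h3 : 0 ≤ᵐ[μ] ⇑(T (u k)) := hpos _ (by
        filter_upwards [hu0 k] with x hx
        simpa using hx)
      filter_upwards [h1, h3, huco, hfpos, hg0', Lp.coeFn_sub (b • g) ((t k * a) • f),
        Lp.coeFn_smul b g, Lp.coeFn_smul (t k * a) f] with x e1 e2 e3 e4 e5 e6 e7 e8
      rw [e6, Pi.sub_apply, e7, e8, Pi.smul_apply, Pi.smul_apply, smul_eq_mul, smul_eq_mul] at e1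
      simp only [Pi.zero_apply] at e2
      rw [e3 k]
      have hbge : b * g x - t k * a * f x ≤ (T (u k)) x := e1
      rcases le_total (g x - t k * f x) 0 with hcase | hcase
      · rw [max_eq_right hcase]
        simpa using e2
      · rw [max_eq_left hcase]
        have h9 : 0 ≤ (b - a) * (t k * f x) :=
          mul_nonneg (sub_nonneg.mpr hab) (mul_nonneg (ht0 k) e4.le)
        have : b * (g x - t k * f x) ≤ b * g x - t k * a * f x := by nlinarith [h9]
        linarith
    have hupow : ∀ k, ∀ᵐ x ∂μ, b^n * u k x ≤ ((T^n) (u k)) x :=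
      fun k => Tpow_super T hpos hb.le (husuper k) n
    -- normalize
    set v : ℕ → Lp ℝ p μ := fun k => ‖u k‖⁻¹ • u k with hv
    have hvco : ∀ᵐ x ∂μ, ∀ k, v k x = ‖u k‖⁻¹ * u k x := by
      rw [ae_all_iff]
      intro k
      filter_upwards [Lp.coeFn_smul (‖u k‖⁻¹) (u k)] with x e1
      show (‖u k‖⁻¹ • u k : Lp ℝ p μ) x = _
      rw [e1, Pi.smul_apply, smul_eq_mul]
    have hv1 : ∀ k, ‖v k‖ = 1 := fun k => norm_smul_inv_norm (hune k)
    have hv0 : ∀ k, ∀ᵐ x ∂μ, 0 ≤ v k x := by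
      intro k
      filter_upwards [hvco, hu0 k] with x e1 e2
      rw [e1 k]
      positivity
    have hvc : ∀ k, ∀ᵐ x ∂μ, b^n * v k x ≤ ((T^n) (v k)) x := by
      intro k
      have e0 : (T^n) (v k) = ‖u k‖⁻¹ • ((T^n) (u k)) := by
        rw [hv]; exact ContinuousLinearMap.map_smul _ _ _
      rw [e0]
      filter_upwards [hupow k, hvco, Lp.coeFn_smul (‖u k‖⁻¹) ((T^n) (u k))] with x e1 e2 e3
      rw [e2 k, e3, Pi.smul_apply, smul_eq_mul]
      have hinv : (0:ℝ) ≤ ‖u k‖⁻¹ := by positivity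
      calc b^n * (‖u k‖⁻¹ * u k x) = ‖u k‖⁻¹ * (b^n * u k x) := by ring
        _ ≤ ‖u k‖⁻¹ * ((T^n) (u k)) x := mul_le_mul_of_nonneg_left e1 hinv
    have hvae : ∀ᵐ x ∂μ, Tendsto (fun k => v k x) atTop (𝓝 0) := by
      filter_upwards [hev, huco, hvco] with x hx e1 e2
      refine Tendsto.congr' ?_ tendsto_const_nhds
      filter_upwards [hx] with k hk
      have : u k x = 0 := by rw [e1 k]; exact max_eq_right (by linarith)
      rw [e2 k, this, mul_zero]
    exact no_seq T hp hpos hcompact (pow_pos hb n) v hv1 hv0 hvc hvae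
  -- Step 1: the set S of upper scalars is nonempty
  set S : Set ℝ := {t : ℝ | ∀ᵐ x ∂μ, g x ≤ t * f x} with hS
  have mem_iff : ∀ t : ℝ, t ∈ S ↔ (∀ᵐ x ∂μ, g x ≤ t * f x) := fun t => Iff.rfl
  have hSne : S.Nonempty := by
    by_contra hno
    rw [Set.not_nonempty_iff_eq_empty] at hno
    have hno' : ∀ t : ℝ, ¬ (∀ᵐ x ∂μ, g x ≤ t * f x) := by
      intro t ht
      exact absurd (hno ▸ ht : t ∈ (∅ : Set ℝ)) (Set.notMem_empty t)
    refine main (fun k => (k:ℝ)) (fun k => Nat.cast_nonneg k) (fun k => hno' k) ?_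
    filter_upwards [hfpos, hg0'] with x hfx hgx
    rw [eventually_atTop]
    refine ⟨⌈g x / f x⌉₊, fun k hk => ?_⟩
    have h1 : g x / f x ≤ (k:ℝ) := le_trans (Nat.le_ceil _) (by exact_mod_cast hk)
    rw [div_le_iff₀ hfx] at h1
    linarith
  have hmonoS : ∀ {t t' : ℝ}, t ∈ S → t ≤ t' → t' ∈ S := by
    intro t t' ht htt'
    rw [mem_iff] at ht ⊢
    filter_upwards [ht, hf0'] with x hx hfx
    nlinarith
  have hSlb : ∀ t ∈ S, (0:ℝ) ≤ t := by
    intro t ht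
    rw [mem_iff] at ht
    by_contra hcon
    push_neg at hcon
    obtain ⟨x, hx1, hx2, hx3⟩ := (ht.and (hfpos.and hg0')).exists
    have := mul_neg_of_neg_of_pos hcon hx2
    linarith
  have hbdd : BddBelow S := ⟨0, fun t ht => hSlb t ht⟩
  set σ := sInf S with hσ
  have hσ0 : 0 ≤ σ := le_csInf hSne (fun t ht => hSlb t ht)
  have hσS : σ ∈ S := by
    rw [mem_iff]
    have hk : ∀ k : ℕ, ∀ᵐ x ∂μ, g x ≤ (σ + 1/(k+1)) * f x := by
      intro k
      obtain ⟨tk, htk, hlt⟩ := Real.lt_sInf_add_pos hSne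
        (show (0:ℝ) < 1/(k+1) by positivity)
      exact (mem_iff _).mp (hmonoS htk hlt.le)
    have hall := ae_all_iff.mpr hk
    filter_upwards [hall, hfpos] with x hx hfx
    refine le_of_forall_pos_le_add (fun ε hε => ?_)
    obtain ⟨k, hk2⟩ := exists_nat_one_div_lt (show (0:ℝ) < ε / f x by positivity)
    calc g x ≤ (σ + 1/(k+1)) * f x := hx k
      _ = σ * f x + (1/(k+1)) * f x := by ring
      _ ≤ σ * f x + ε := by
          have : (1/((k:ℝ)+1)) * f x ≤ (ε / f x) * f x :=
            mul_le_mul_of_nonneg_right hk2.le hfx.le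
          rw [div_mul_cancel₀ _ hfx.ne'] at this
          linarith
  have hσpos : 0 < σ := by
    rcases hσ0.lt_or_eq with h | h
    · exact h
    · exfalso
      apply hgne
      have hgz : ⇑g =ᵐ[μ] ⇑(0 : Lp ℝ p μ) := by
        filter_upwards [(mem_iff _).mp hσS, hg0', Lp.coeFn_zero ℝ p μ] with x hx1 hx2 hx3
        rw [← h] at hx1
        rw [hx3, Pi.zero_apply]
        nlinarith
      exact Lp.ext hgz
  -- Step 2: a = b
  have hak : a = b := by
    by_contra hne'
    have hab' : a < b := lt_of_le_of_ne hab hne'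
    have hfσ : ∀ᵐ x ∂μ, g x ≤ (σ • f) x := by
      filter_upwards [(mem_iff _).mp hσS, Lp.coeFn_smul σ f] with x hx e1
      rw [e1, Pi.smul_apply, smul_eq_mul]
      exact hx
    have hiter : ∀ m : ℕ, ∀ᵐ x ∂μ, b^m * g x ≤ (σ * a^m) * f x := by
      intro m
      have h1 := Tpow_mono T hpos m hfσ
      have e1 : (T^m) g = b^m • g := eig_pow T hgeig m
      have e2 : (T^m) (σ • f) = (σ * a^m) • f := by
        rw [ContinuousLinearMap.map_smul_of_tower, eig_pow T hfeig m, smul_smul]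
      rw [e1, e2] at h1
      filter_upwards [h1, Lp.coeFn_smul (b^m) g, Lp.coeFn_smul (σ * a^m) f] with x e3 e4 e5
      rw [e4, e5, Pi.smul_apply, Pi.smul_apply, smul_eq_mul, smul_eq_mul] at e3
      exact e3
    have hall := ae_all_iff.mpr hiter
    apply hgne
    refine Lp.ext ?_
    have hgz : ∀ᵐ x ∂μ, g x = 0 := by
      filter_upwards [hall, hfpos, hg0'] with x hx hfx hgx
      have hgle : ∀ m : ℕ, g x ≤ σ * f x * (a/b)^m := by
        intro m
        have hbm : (0:ℝ) < b^m := pow_pos hb m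
        have := hx m
        rw [div_pow]
        rw [show σ * f x * (a^m / b^m) = (σ * a^m * f x) / b^m by ring]
        rw [le_div_iff₀ hbm]
        nlinarith
      have htend : Tendsto (fun m : ℕ => σ * f x * (a/b)^m) atTop (𝓝 0) := by
        have h0 : Tendsto (fun m : ℕ => (a/b)^m) atTop (𝓝 0) := by
          apply tendsto_pow_atTop_nhds_zero_of_lt_one
          · positivity
          · rw [div_lt_one hb]; exact hab'
        have := h0.const_mul (σ * f x)
        simpa using this
      have hle0 : g x ≤ 0 := ge_of_tendsto' htend hgle
      linarith
    filter_upwards [hgz, Lp.coeFn_zero ℝ p μ] with x h1 h2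
    rw [h1, h2, Pi.zero_apply]
  -- Step 3: conclude g = σ • f
  set h : Lp ℝ p μ := σ • f - g with hh
  have hhco : ∀ᵐ x ∂μ, h x = σ * f x - g x := by
    filter_upwards [Lp.coeFn_sub (σ • f) g, Lp.coeFn_smul σ f] with x e1 e2
    show (σ • f - g : Lp ℝ p μ) x = _
    rw [e1, Pi.sub_apply, e2, Pi.smul_apply, smul_eq_mul]
  have hh0 : ∀ᵐ x ∂μ, 0 ≤ h x := by
    filter_upwards [hhco, (mem_iff _).mp hσS] with x e1 e2
    rw [e1]; linarith
  by_cases hhz : h = 0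
  · refine ⟨σ, ?_⟩
    have := sub_eq_zero.mp (hh ▸ hhz)
    exact this.symm
  · exfalso
    -- h is a nonnegative nonzero eigenvector, hence a.e. positive
    have hheig : T h = a • h := by
      rw [hh, map_sub, ContinuousLinearMap.map_smul_of_tower, hfeig, hgeig, ← hak,
        smul_sub, smul_comm σ a f]
    have hh0' : 0 ≤ᵐ[μ] ⇑h := by filter_upwards [hh0] with x hx; simpa using hx
    obtain ⟨mm, hmm1, hmpos⟩ := hesp h hh0' hhz
    rw [eig_pow T hheig mm] at hmpos
    have hhpos : ∀ᵐ x ∂μ, 0 < h x := by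
      filter_upwards [hmpos, Lp.coeFn_smul (a^mm) h] with x hx e1
      rw [e1, Pi.smul_apply, smul_eq_mul] at hx
      have ham : 0 < a^mm := pow_pos ha mm
      nlinarith
    -- apply the master argument with t k = σ - σ/(k+2)
    have hdiv : Tendsto (fun k : ℕ => σ/((k:ℝ)+2)) atTop (𝓝 0) := by
      apply Tendsto.div_atTop tendsto_const_nhds
      exact tendsto_atTop_add_const_right _ 2 tendsto_natCast_atTop_atTop
    refine main (fun k => σ - σ/((k:ℝ)+2)) (fun k => ?_) (fun k => ?_) ?_
    · have h1 : σ/((k:ℝ)+2) ≤ σ := by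
        apply div_le_self hσpos.le
        have : (0:ℝ) ≤ (k:ℝ) := Nat.cast_nonneg k
        linarith
      linarith
    · intro hmem
      have hmem' : (σ - σ/((k:ℝ)+2)) ∈ S := (mem_iff _).mpr hmem
      have h2 := csInf_le hbdd hmem'
      have h3 : 0 < σ/((k:ℝ)+2) := by positivity
      rw [← hσ] at h2
      linarith
    · filter_upwards [hhpos, hhco, hfpos] with x h1 h2 h3
      have hlt : g x < σ * f x := by rw [h2] at h1; linarith
      have htend : Tendsto (fun k : ℕ => (σ - σ/((k:ℝ)+2)) * f x) atTop (𝓝 (σ * f x)) := by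
        have h4 : Tendsto (fun k : ℕ => σ - σ/((k:ℝ)+2)) atTop (𝓝 (σ - 0)) :=
          (tendsto_const_nhds (x := σ)).sub hdiv
        have h5 := h4.mul (tendsto_const_nhds (x := f x) (f := atTop (α := ℕ)))
        simpa using h5
      exact htend.eventually (eventually_ge_nhds hlt)


end Stmt1Aux



open MeasureTheory
open scoped ENNReal

/-- a bounded positive operator on `L^p` with eventual strong positivity, a compact
power, and positive spectral radius has at most one (up to scale) a.e. non-negative nonzero
eigenfunction. -/
theorem stmt1 {X : Type*} [MeasurableSpace X] {μ : Measure X} [SigmaFinite μ]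
    {p : ℝ≥0∞} [Fact (1 ≤ p)] (hp : p ≠ ∞)
    (T : Lp ℝ p μ →L[ℝ] Lp ℝ p μ)
    (hpos : ∀ f : Lp ℝ p μ, 0 ≤ᵐ[μ] ⇑f → 0 ≤ᵐ[μ] ⇑(T f))
    (hesp : ∀ f : Lp ℝ p μ, 0 ≤ᵐ[μ] ⇑f → f ≠ 0 →
      ∃ n : ℕ, 1 ≤ n ∧ ∀ᵐ x ∂μ, 0 < ((T ^ n) f : Lp ℝ p μ) x)
    (hcpt : ∃ n : ℕ, 1 ≤ n ∧ IsCompactOperator ⇑(T ^ n))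
    (hr : 0 < spectralRadius ℝ T)
    (f g : Lp ℝ p μ) (a b : ℝ)
    (hf0 : 0 ≤ᵐ[μ] ⇑f) (hfne : f ≠ 0) (hfeig : T f = a • f)
    (hg0 : 0 ≤ᵐ[μ] ⇑g) (hgne : g ≠ 0) (hgeig : T g = b • g) :
    ∃ c : ℝ, g = c • f := by
  rcases le_total a b with hab | hab
  · exact Stmt1Aux.key T hp hpos hesp hcpt f g a b hf0 hfne hfeig hg0 hgne hgeig hab
  · obtain ⟨c, hc⟩ :=
      Stmt1Aux.key T hp hpos hesp hcpt g f b a hg0 hgne hgeig hf0 hfne hfeig hab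
    have hcne : c ≠ 0 := by
      intro h0; rw [h0, zero_smul] at hc; exact hfne hc
    exact ⟨c⁻¹, by rw [hc, smul_smul, inv_mul_cancel₀ hcne, one_smul]⟩
end

section
/- Let $T$ be a bounded positive linear operator on $L^p$ ($1 \le p < \infty$) satisfying eventual strong positivity, power compactness ($T^n$ compact for some $n$), and $r(T) > 0$. Then there exists $\bar f \in L^p$ with $\bar f > 0$ a.e. such that $T\bar f = r(T)\bar f$; in particular, $r(T)$ is an eigenvalue of $T$. -/
open MeasureTheory Filter Topology
open scoped ENNReal

set_option linter.unusedSectionVars false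
set_option synthInstance.maxHeartbeats 1000000
set_option maxHeartbeats 1000000

section Aux

variable {E : Type*} [NormedAddCommGroup E] [Lattice E] [HasSolidNorm E] [IsOrderedAddMonoid E] [NormedSpace ℝ E] [CompleteSpace E]

/-- positivity of an operator -/
def PosOp (S : E →L[ℝ] E) : Prop := ∀ f : E, 0 ≤ f → 0 ≤ S f

variable (hsm : ∀ (c : ℝ) (f : E), 0 ≤ c → 0 ≤ f → 0 ≤ c • f)

theorem PosOp.mul {S S' : E →L[ℝ] E} (h : PosOp S) (h' : PosOp S') : PosOp (S * S') :=
  fun f hf => h _ (h' f hf)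

theorem PosOp.pow {S : E →L[ℝ] E} (h : PosOp S) (k : ℕ) : PosOp (S ^ k) := by
  induction k with
  | zero => intro f hf; simpa using hf
  | succ n ih => rw [pow_succ]; exact fun f hf => ih _ (h f hf)

theorem PosOp.add {S S' : E →L[ℝ] E} (h : PosOp S) (h' : PosOp S') : PosOp (S + S') :=
  fun f hf => by simpa using add_nonneg (h f hf) (h' f hf)

include hsm in
theorem PosOp.smul {S : E →L[ℝ] E} (h : PosOp S) {c : ℝ} (hc : 0 ≤ c) : PosOp (c • S) :=
  fun f hf => by
    rw [ContinuousLinearMap.smul_apply]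
    exact hsm c _ hc (h f hf)

theorem PosOp.sum {ι : Type*} {s : Finset ι} {F : ι → E →L[ℝ] E}
    (h : ∀ i ∈ s, PosOp (F i)) : PosOp (∑ i ∈ s, F i) := fun f hf => by
  rw [ContinuousLinearMap.sum_apply]
  exact Finset.sum_nonneg fun i hi => h i hi f hf

theorem PosOp.tsum {F : ℕ → E →L[ℝ] E} (hS : Summable F) (h : ∀ k, PosOp (F k)) :
    PosOp (∑' k, F k) := by
  intro f hf
  have h1 : HasSum (fun k => F k f) ((∑' k, F k) f) :=
    (ContinuousLinearMap.apply ℝ E f).hasSum hS.hasSum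
  refine IsClosed.mem_of_tendsto isClosed_nonneg h1 ?_
  filter_upwards with s
  exact Finset.sum_nonneg fun i _ => h i f hf

theorem PosOp.abs_apply_le {S : E →L[ℝ] E} (h : PosOp S) (f : E) : |S f| ≤ S |f| := by
  rw [abs_le']
  have hp : 0 ≤ |f| - f := sub_nonneg.mpr (le_abs_self f)
  have hq : 0 ≤ |f| + f := by rw [← sub_neg_eq_add]; exact sub_nonneg.mpr (neg_le_abs f)
  constructor
  · have h1 := h _ hp
    rw [map_sub] at h1
    exact sub_nonneg.mp h1
  · have h1 := h _ hq
    rw [map_add, ← sub_neg_eq_add] at h1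
    exact sub_nonneg.mp h1

theorem PosOp.norm_apply_le {S : E →L[ℝ] E} (h : PosOp S) (f : E) : ‖S f‖ ≤ ‖S |f|‖ := by
  apply HasSolidNorm.solid
  calc |S f| ≤ S |f| := h.abs_apply_le f
  _ ≤ |S (|f|)| := le_abs_self _

theorem PosOp.opNorm_le {A B : E →L[ℝ] E} (hA : PosOp A) (hB : PosOp B)
    (h : ∀ f, 0 ≤ f → A f ≤ B f) : ‖A‖ ≤ ‖B‖ := by
  refine ContinuousLinearMap.opNorm_le_bound _ (norm_nonneg B) fun f => ?_
  have h1 : ‖A f‖ ≤ ‖B (|f|)‖ := by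
    apply HasSolidNorm.solid
    have : |A f| ≤ B (|f|) := le_trans (hA.abs_apply_le f) (h _ (abs_nonneg f))
    exact le_trans this (le_abs_self _)
  have h2 : ‖B (|f|)‖ ≤ ‖B‖ * ‖f‖ := by
    have := B.le_opNorm (|f|)
    rwa [norm_abs_eq_norm] at this
  linarith

end Aux
section Perturb

variable {E : Type*} [NormedAddCommGroup E] [Lattice E] [HasSolidNorm E] [IsOrderedAddMonoid E] [NormedSpace ℝ E] [CompleteSpace E]
  [Nontrivial E]

theorem algebraMap_posOp (hsm : ∀ (c : ℝ) (f : E), 0 ≤ c → 0 ≤ f → 0 ≤ c • f)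
    {d : ℝ} (hd0 : 0 ≤ d) : PosOp (algebraMap ℝ (E →L[ℝ] E) d) := by
  intro f hf
  rw [Algebra.algebraMap_eq_smul_one]
  show 0 ≤ d • ((1 : E →L[ℝ] E) f)
  exact hsm d _ hd0 hf

theorem perturb_unit (u : (E →L[ℝ] E)ˣ) (d : ℝ)
    (hd : ‖(↑u⁻¹ : E →L[ℝ] E)‖ * |d| < 1) :
    ∃ w : (E →L[ℝ] E)ˣ, (↑w : E →L[ℝ] E) = ↑u - algebraMap ℝ (E →L[ℝ] E) d ∧
      (↑w⁻¹ : E →L[ℝ] E)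
        = (∑' k : ℕ, ((↑u⁻¹ : E →L[ℝ] E) * algebraMap ℝ (E →L[ℝ] E) d) ^ k) * ↑u⁻¹ ∧
      ‖(↑w⁻¹ : E →L[ℝ] E)‖ ≤ (1 - ‖(↑u⁻¹ : E →L[ℝ] E)‖ * |d|)⁻¹ * ‖(↑u⁻¹ : E →L[ℝ] E)‖ := by
  set t : E →L[ℝ] E := (↑u⁻¹ : E →L[ℝ] E) * algebraMap ℝ (E →L[ℝ] E) d with ht_def
  have htle : ‖t‖ ≤ ‖(↑u⁻¹ : E →L[ℝ] E)‖ * |d| := by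
    calc ‖t‖ ≤ ‖(↑u⁻¹ : E →L[ℝ] E)‖ * ‖algebraMap ℝ (E →L[ℝ] E) d‖ := norm_mul_le _ _
    _ = ‖(↑u⁻¹ : E →L[ℝ] E)‖ * |d| := by rw [norm_algebraMap', Real.norm_eq_abs]
  have ht : ‖t‖ < 1 := lt_of_le_of_lt htle hd
  have htu : t * ↑u = algebraMap ℝ (E →L[ℝ] E) d := by
    rw [ht_def, mul_assoc, Algebra.commutes d (↑u : E →L[ℝ] E), ← mul_assoc, Units.inv_mul,
      one_mul]
  have hval : (↑u : E →L[ℝ] E) - algebraMap ℝ (E →L[ℝ] E) d = ↑u * (1 - t) := by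
    rw [mul_sub, mul_one, ht_def, ← mul_assoc, Units.mul_inv, one_mul]
  have hval' : (↑u : E →L[ℝ] E) - algebraMap ℝ (E →L[ℝ] E) d = (1 - t) * ↑u := by
    rw [sub_mul, one_mul, htu]
  have hcomm : (↑u⁻¹ : E →L[ℝ] E) * (1 - t) = (1 - t) * ↑u⁻¹ := by
    rw [mul_sub, sub_mul, mul_one, one_mul, ht_def, mul_assoc,
      ← Algebra.commutes d (↑u⁻¹ : E →L[ℝ] E), ← mul_assoc]
  refine ⟨Units.mk ((↑u : E →L[ℝ] E) - algebraMap ℝ (E →L[ℝ] E) d)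
      ((∑' k : ℕ, t ^ k) * ↑u⁻¹) ?_ ?_, rfl, rfl, ?_⟩
  · rw [hval, mul_assoc, ← mul_assoc (1 - t), mul_neg_geom_series _ ht, one_mul, Units.mul_inv]
  · calc ((∑' k : ℕ, t ^ k) * (↑u⁻¹ : E →L[ℝ] E)) * ((↑u : E →L[ℝ] E)
          - algebraMap ℝ (E →L[ℝ] E) d)
        = (∑' k : ℕ, t ^ k) * (((↑u⁻¹ : E →L[ℝ] E)) * ((1 - t) * ↑u)) := by rw [hval', mul_assoc]
    _ = (∑' k : ℕ, t ^ k) * (((1 - t) * (↑u⁻¹ : E →L[ℝ] E)) * ↑u) := by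
        rw [← mul_assoc ((↑u⁻¹ : E →L[ℝ] E)), hcomm]
    _ = ((∑' k : ℕ, t ^ k) * (1 - t)) * ((↑u⁻¹ : E →L[ℝ] E) * ↑u) := by
        rw [mul_assoc (1 - t), ← mul_assoc]
    _ = 1 := by rw [geom_series_mul_neg _ ht, Units.inv_mul, one_mul]
  · have h1 : ‖(∑' k : ℕ, t ^ k) * (↑u⁻¹ : E →L[ℝ] E)‖
        ≤ ‖∑' k : ℕ, t ^ k‖ * ‖(↑u⁻¹ : E →L[ℝ] E)‖ := norm_mul_le _ _
    have h2 : ‖∑' k : ℕ, t ^ k‖ ≤ (1 - ‖t‖)⁻¹ := by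
      have h := tsum_geometric_le_of_norm_lt_one t ht
      rwa [norm_one, sub_self, zero_add] at h
    have h3 : (1 - ‖t‖)⁻¹ ≤ (1 - ‖(↑u⁻¹ : E →L[ℝ] E)‖ * |d|)⁻¹ := by
      apply inv_anti₀ (by linarith) (by linarith)
    refine le_trans h1 (mul_le_mul_of_nonneg_right (le_trans h2 h3) (norm_nonneg _))

theorem perturb_unit_pos
    (hsm : ∀ (c : ℝ) (f : E), 0 ≤ c → 0 ≤ f → 0 ≤ c • f)
    (u : (E →L[ℝ] E)ˣ) (d : ℝ)
    (hd : ‖(↑u⁻¹ : E →L[ℝ] E)‖ * |d| < 1) (hd0 : 0 ≤ d)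
    (hpos : PosOp (↑u⁻¹ : E →L[ℝ] E)) :
    ∃ w : (E →L[ℝ] E)ˣ, (↑w : E →L[ℝ] E) = ↑u - algebraMap ℝ (E →L[ℝ] E) d ∧
      PosOp (↑w⁻¹ : E →L[ℝ] E) ∧
      ‖(↑w⁻¹ : E →L[ℝ] E)‖ ≤ (1 - ‖(↑u⁻¹ : E →L[ℝ] E)‖ * |d|)⁻¹ * ‖(↑u⁻¹ : E →L[ℝ] E)‖ := by
  obtain ⟨w, hw1, hw2, hw3⟩ := perturb_unit u d hd
  refine ⟨w, hw1, ?_, hw3⟩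
  rw [hw2]
  have htle : ‖(↑u⁻¹ : E →L[ℝ] E) * algebraMap ℝ (E →L[ℝ] E) d‖
      ≤ ‖(↑u⁻¹ : E →L[ℝ] E)‖ * |d| := by
    calc ‖(↑u⁻¹ : E →L[ℝ] E) * algebraMap ℝ (E →L[ℝ] E) d‖
        ≤ ‖(↑u⁻¹ : E →L[ℝ] E)‖ * ‖algebraMap ℝ (E →L[ℝ] E) d‖ := norm_mul_le _ _
    _ = ‖(↑u⁻¹ : E →L[ℝ] E)‖ * |d| := by rw [norm_algebraMap', Real.norm_eq_abs]
  have ht : ‖(↑u⁻¹ : E →L[ℝ] E) * algebraMap ℝ (E →L[ℝ] E) d‖ < 1 := lt_of_le_of_lt htle hd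
  have hsummable : Summable fun k : ℕ =>
      ((↑u⁻¹ : E →L[ℝ] E) * algebraMap ℝ (E →L[ℝ] E) d) ^ k :=
    summable_geometric_of_norm_lt_one ht
  refine PosOp.mul (PosOp.tsum hsummable fun k => ?_) hpos
  exact (hpos.mul (algebraMap_posOp hsm hd0)).pow k

end Perturb
section Neumann

variable {E : Type*} [NormedAddCommGroup E] [Lattice E] [HasSolidNorm E] [IsOrderedAddMonoid E] [NormedSpace ℝ E] [CompleteSpace E]
  [Nontrivial E]

theorem neumann_unit (hsm : ∀ (c : ℝ) (f : E), 0 ≤ c → 0 ≤ f → 0 ≤ c • f)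
    (T : E →L[ℝ] E) (hT : PosOp T) {lam : ℝ} (hlam : ‖T‖ < lam) :
    ∃ u : (E →L[ℝ] E)ˣ, (↑u : E →L[ℝ] E) = algebraMap ℝ (E →L[ℝ] E) lam - T ∧
      PosOp (↑u⁻¹ : E →L[ℝ] E) := by
  have hlam0 : 0 < lam := lt_of_le_of_lt (norm_nonneg T) hlam
  set t : E →L[ℝ] E := algebraMap ℝ (E →L[ℝ] E) lam⁻¹ * T with ht_def
  have htle : ‖t‖ ≤ lam⁻¹ * ‖T‖ := by
    calc ‖t‖ ≤ ‖algebraMap ℝ (E →L[ℝ] E) lam⁻¹‖ * ‖T‖ := norm_mul_le _ _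
    _ = lam⁻¹ * ‖T‖ := by
        rw [norm_algebraMap', Real.norm_eq_abs, abs_of_nonneg (le_of_lt (inv_pos.mpr hlam0))]
  have ht : ‖t‖ < 1 := by
    refine lt_of_le_of_lt htle ?_
    rw [← inv_mul_cancel₀ (ne_of_gt hlam0)]
    exact mul_lt_mul_of_pos_left hlam (inv_pos.mpr hlam0)
  have halg : algebraMap ℝ (E →L[ℝ] E) lam * algebraMap ℝ (E →L[ℝ] E) lam⁻¹ = 1 := by
    rw [← map_mul, mul_inv_cancel₀ (ne_of_gt hlam0), map_one]
  have halg' : algebraMap ℝ (E →L[ℝ] E) lam⁻¹ * algebraMap ℝ (E →L[ℝ] E) lam = 1 := by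
    rw [← map_mul, inv_mul_cancel₀ (ne_of_gt hlam0), map_one]
  have hval : algebraMap ℝ (E →L[ℝ] E) lam - T = algebraMap ℝ (E →L[ℝ] E) lam * (1 - t) := by
    rw [mul_sub, mul_one, ht_def, ← mul_assoc, halg, one_mul]
  have hval' : algebraMap ℝ (E →L[ℝ] E) lam - T = (1 - t) * algebraMap ℝ (E →L[ℝ] E) lam := by
    rw [sub_mul, one_mul, ht_def, mul_assoc, ← Algebra.commutes lam T, ← mul_assoc, halg',
      one_mul]
  refine ⟨Units.mk (algebraMap ℝ (E →L[ℝ] E) lam - T)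
      ((∑' k : ℕ, t ^ k) * algebraMap ℝ (E →L[ℝ] E) lam⁻¹) ?_ ?_, rfl, ?_⟩
  · rw [hval, mul_assoc, ← mul_assoc (1 - t), mul_neg_geom_series _ ht, one_mul, halg]
  · calc ((∑' k : ℕ, t ^ k) * algebraMap ℝ (E →L[ℝ] E) lam⁻¹)
          * (algebraMap ℝ (E →L[ℝ] E) lam - T)
        = (∑' k : ℕ, t ^ k) * (algebraMap ℝ (E →L[ℝ] E) lam⁻¹ * ((1 - t)
            * algebraMap ℝ (E →L[ℝ] E) lam)) := by rw [hval', mul_assoc]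
    _ = (∑' k : ℕ, t ^ k) * (((1 - t) * algebraMap ℝ (E →L[ℝ] E) lam⁻¹)
            * algebraMap ℝ (E →L[ℝ] E) lam) := by
        rw [← mul_assoc (algebraMap ℝ (E →L[ℝ] E) lam⁻¹), ← Algebra.commutes lam⁻¹ (1 - t)]
    _ = ((∑' k : ℕ, t ^ k) * (1 - t)) * (algebraMap ℝ (E →L[ℝ] E) lam⁻¹
            * algebraMap ℝ (E →L[ℝ] E) lam) := by rw [mul_assoc (1 - t), ← mul_assoc]
    _ = 1 := by rw [geom_series_mul_neg _ ht, halg', one_mul]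
  · show PosOp ((∑' k : ℕ, t ^ k) * algebraMap ℝ (E →L[ℝ] E) lam⁻¹)
    refine PosOp.mul (PosOp.tsum (summable_geometric_of_norm_lt_one ht) fun k => ?_)
      (algebraMap_posOp hsm (le_of_lt (inv_pos.mpr hlam0)))
    exact ((algebraMap_posOp hsm (le_of_lt (inv_pos.mpr hlam0))).mul hT).pow k

end Neumann
section Continuation

variable {E : Type*} [NormedAddCommGroup E] [Lattice E] [HasSolidNorm E] [IsOrderedAddMonoid E] [NormedSpace ℝ E] [CompleteSpace E]
  [Nontrivial E]

/-- If the resolvent exists and is positive just above `s`, and `s - T` is invertible, then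
the resolvent exists and is positive on `[s - δ, s]` for some `δ > 0`. -/
theorem extend_at (hsm : ∀ (c : ℝ) (f : E), 0 ≤ c → 0 ≤ f → 0 ≤ c • f)
    (T : E →L[ℝ] E) {s : ℝ}
    (hAll : ∀ lam : ℝ, s < lam → ∃ u : (E →L[ℝ] E)ˣ,
      (↑u : E →L[ℝ] E) = algebraMap ℝ (E →L[ℝ] E) lam - T ∧ PosOp (↑u⁻¹ : E →L[ℝ] E))
    (hs : IsUnit (algebraMap ℝ (E →L[ℝ] E) s - T)) :
    ∃ δ : ℝ, 0 < δ ∧ ∀ d : ℝ, 0 ≤ d → d < δ → ∃ u : (E →L[ℝ] E)ˣ,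
      (↑u : E →L[ℝ] E) = algebraMap ℝ (E →L[ℝ] E) (s - d) - T ∧
      PosOp (↑u⁻¹ : E →L[ℝ] E) := by
  obtain ⟨us, hus⟩ := hs
  set M : ℝ := ‖(↑us⁻¹ : E →L[ℝ] E)‖ with hM
  have hM0 : 0 ≤ M := norm_nonneg _
  set ε : ℝ := 1 / (2 * (M + 1)) with hε
  have hε0 : 0 < ε := by positivity
  obtain ⟨u1, hu1val, hu1pos⟩ := hAll (s + ε) (by linarith)
  -- norm bound on u1⁻¹ via perturbation of us by -ε
  have hMε : M * |(-ε)| < 1 := by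
    rw [abs_neg, abs_of_pos hε0, hε]
    rw [div_eq_mul_inv, one_mul]
    calc M * (2 * (M + 1))⁻¹ < (M + 1) * (2 * (M + 1))⁻¹ := by
          apply mul_lt_mul_of_pos_right (by linarith)
          positivity
    _ = 2⁻¹ := by
          rw [mul_comm (2:ℝ) (M+1), mul_inv, ← mul_assoc, mul_inv_cancel₀ (by linarith), one_mul]
    _ < 1 := by norm_num
  obtain ⟨w, hwval, _, hwnorm⟩ := perturb_unit us (-ε) hMε
  have hw_eq_u1 : w = u1 := by
    apply Units.ext
    rw [hwval, hu1val, hus, map_neg, sub_neg_eq_add, map_add]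
    abel
  have hu1norm : ‖(↑u1⁻¹ : E →L[ℝ] E)‖ ≤ 2 * M := by
    rw [← hw_eq_u1]
    refine le_trans hwnorm ?_
    have h1 : (1 - M * |(-ε)|)⁻¹ ≤ 2 := by
      rw [abs_neg, abs_of_pos hε0]
      have hMε2 : M * ε ≤ 1 / 2 := by
        rw [hε, div_eq_mul_inv, one_mul]
        calc M * (2 * (M + 1))⁻¹ ≤ (M + 1) * (2 * (M + 1))⁻¹ := by
              apply mul_le_mul_of_nonneg_right (by linarith)
              positivity
        _ = 2⁻¹ := by
              rw [mul_comm (2:ℝ) (M+1), mul_inv, ← mul_assoc,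
                mul_inv_cancel₀ (by linarith), one_mul]
        _ ≤ 1 / 2 := by norm_num
      rw [show (2:ℝ) = (1/2)⁻¹ by norm_num]
      apply inv_anti₀ (by norm_num)
      linarith
    exact mul_le_mul_of_nonneg_right h1 hM0
  refine ⟨1 / (2 * (M + 1) ^ 2), by positivity, fun d hd0 hdlt => ?_⟩
  have hcond : ‖(↑u1⁻¹ : E →L[ℝ] E)‖ * |ε + d| < 1 := by
    have habs : |ε + d| = ε + d := abs_of_pos (by linarith)
    rw [habs]
    have h2 : ‖(↑u1⁻¹ : E →L[ℝ] E)‖ * (ε + d) ≤ 2 * M * (ε + d) :=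
      mul_le_mul_of_nonneg_right hu1norm (by linarith)
    refine lt_of_le_of_lt h2 ?_
    have key : 2 * M * (ε + d) < 1 := by
      have hεval : ε = 1 / (2 * (M + 1)) := hε
      have hd2 : d < 1 / (2 * (M + 1) ^ 2) := hdlt
      have hMp : (0:ℝ) < M + 1 := by linarith
      rw [hεval]
      have expand : 2 * M * (1 / (2 * (M + 1)) + d) = M / (M + 1) + 2 * M * d := by
        field_simp
      rw [expand]
      have h3 : 2 * M * d ≤ 2 * M * (1 / (2 * (M + 1) ^ 2)) :=
        mul_le_mul_of_nonneg_left (le_of_lt hd2) (by linarith)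
      have h4 : 2 * M * (1 / (2 * (M + 1) ^ 2)) = M / (M + 1) ^ 2 := by
        field_simp
      have h5 : M / (M + 1) + M / (M + 1) ^ 2 < 1 := by
        rw [div_add_div _ _ (ne_of_gt hMp) (ne_of_gt (by positivity : (0:ℝ) < (M+1)^2)),
          div_lt_one (by positivity)]
        nlinarith
      nlinarith [h3, h4, h5]
    exact key
  obtain ⟨u, huval, hupos, _⟩ := perturb_unit_pos hsm u1 (ε + d) hcond (by linarith) hu1pos
  refine ⟨u, ?_, hupos⟩
  rw [huval, hu1val, map_add, map_sub, map_add]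
  abel

/-- Positivity of the resolvent everywhere above `r`. -/
theorem resolvent_pos_of_gt (hsm : ∀ (c : ℝ) (f : E), 0 ≤ c → 0 ≤ f → 0 ≤ c • f)
    (T : E →L[ℝ] E) (hT : PosOp T) {r : ℝ} (hr0 : 0 < r)
    (hspec : ∀ k ∈ spectrum ℝ T, |k| ≤ r) :
    ∀ lam : ℝ, r < lam → ∃ u : (E →L[ℝ] E)ˣ,
      (↑u : E →L[ℝ] E) = algebraMap ℝ (E →L[ℝ] E) lam - T ∧ PosOp (↑u⁻¹ : E →L[ℝ] E) := by
  set Sset : Set ℝ := {t : ℝ | r ≤ t ∧ ∀ lam : ℝ, t < lam → ∃ u : (E →L[ℝ] E)ˣ,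
    (↑u : E →L[ℝ] E) = algebraMap ℝ (E →L[ℝ] E) lam - T ∧ PosOp (↑u⁻¹ : E →L[ℝ] E)}
    with hSset
  have hne : max r ‖T‖ ∈ Sset := by
    refine ⟨le_max_left _ _, fun lam hlam => ?_⟩
    exact neumann_unit hsm T hT (lt_of_le_of_lt (le_max_right r ‖T‖) hlam)
  have hbdd : BddBelow Sset := ⟨r, fun t ht => ht.1⟩
  set s : ℝ := sInf Sset with hsdef
  have hrs : r ≤ s := le_csInf ⟨_, hne⟩ fun t ht => ht.1
  have hAll : ∀ lam : ℝ, s < lam → ∃ u : (E →L[ℝ] E)ˣ,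
      (↑u : E →L[ℝ] E) = algebraMap ℝ (E →L[ℝ] E) lam - T ∧
      PosOp (↑u⁻¹ : E →L[ℝ] E) := by
    intro lam hlam
    obtain ⟨t, htS, htlt⟩ := exists_lt_of_csInf_lt ⟨_, hne⟩ hlam
    exact htS.2 lam htlt
  have hseq : s ≤ r := by
    by_contra hcon
    push_neg at hcon
    have hsu : IsUnit (algebraMap ℝ (E →L[ℝ] E) s - T) := by
      rw [← spectrum.notMem_iff]
      intro hmem
      have := hspec s hmem
      rw [abs_of_pos (by linarith)] at this
      linarith
    obtain ⟨δ, hδ0, hδ⟩ := extend_at hsm T hAll hsu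
    have ht'mem : max r (s - δ / 2) ∈ Sset := by
      refine ⟨le_max_left _ _, fun lam hlam => ?_⟩
      rcases lt_or_ge s lam with h | h
      · exact hAll lam h
      · have h1 : s - δ / 2 < lam := lt_of_le_of_lt (le_max_right r (s - δ/2)) hlam
        have h2 : 0 ≤ s - lam := by linarith
        have h3 : s - lam < δ := by linarith
        obtain ⟨u, huval, hupos⟩ := hδ (s - lam) h2 h3
        refine ⟨u, ?_, hupos⟩
        rw [huval]
        norm_num
    have : s ≤ max r (s - δ / 2) := csInf_le hbdd ht'mem
    have hlt : max r (s - δ / 2) < s := by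
      apply max_lt hcon
      linarith
    linarith
  have hsr : s = r := le_antisymm hseq hrs
  intro lam hlam
  exact hAll lam (by rw [hsr]; exact hlam)

end Continuation
section Pringsheim

open Polynomial in
theorem pow_mem_spectrum_pow {E : Type*} [NormedAddCommGroup E] [Lattice E] [HasSolidNorm E] [IsOrderedAddMonoid E] [NormedSpace ℝ E]
    (T : E →L[ℝ] E) {k : ℝ} (hk : k ∈ spectrum ℝ T) (j : ℕ) :
    k ^ j ∈ spectrum ℝ (T ^ j) := by
  have h := spectrum.subset_polynomial_aeval T (X ^ j : Polynomial ℝ)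
  have hmem : k ^ j ∈ (fun x => eval x (X ^ j : Polynomial ℝ)) '' spectrum ℝ T :=
    ⟨k, hk, by simp⟩
  have := h hmem
  rwa [Polynomial.aeval_X_pow] at this

variable {E : Type*} [NormedAddCommGroup E] [Lattice E] [HasSolidNorm E] [IsOrderedAddMonoid E] [NormedSpace ℝ E] [CompleteSpace E]
  [Nontrivial E]

theorem r_mem_spectrum (hsm : ∀ (c : ℝ) (f : E), 0 ≤ c → 0 ≤ f → 0 ≤ c • f)
    (T : E →L[ℝ] E) (hT : PosOp T) {r : ℝ} (hr0 : 0 < r)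
    (hspec : ∀ k ∈ spectrum ℝ T, |k| ≤ r)
    (hnear : ∀ ε : ℝ, 0 < ε → ∃ k ∈ spectrum ℝ T, r - ε < |k|) :
    r ∈ spectrum ℝ T := by
  by_contra hnot
  have hsu : IsUnit (algebraMap ℝ (E →L[ℝ] E) r - T) := spectrum.notMem_iff.mp hnot
  have hAll := resolvent_pos_of_gt hsm T hT hr0 hspec
  obtain ⟨δ, hδ0, hδ⟩ := extend_at hsm T hAll hsu
  set d : ℝ := min δ r / 2 with hd_def
  have hd0 : 0 < d := by
    rw [hd_def]
    have := lt_min_iff.mpr ⟨hδ0, hr0⟩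
    positivity
  have hdδ : d < δ := by
    rw [hd_def]
    have h1 : min δ r ≤ δ := min_le_left _ _
    linarith
  have hdr : d < r := by
    rw [hd_def]
    have h1 : min δ r ≤ r := min_le_right _ _
    linarith
  obtain ⟨u₀, hu₀val, hRpos⟩ := hδ d (le_of_lt hd0) hdδ
  set lam : ℝ := r - d with hlam_def
  have hlam0 : 0 < lam := by rw [hlam_def]; linarith
  have hlamne : lam ≠ 0 := ne_of_gt hlam0
  have hlamr : lam < r := by rw [hlam_def]; linarith
  set R : E →L[ℝ] E := (↑u₀⁻¹ : E →L[ℝ] E) with hR_def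
  set c : E →L[ℝ] E := algebraMap ℝ (E →L[ℝ] E) lam⁻¹ with hc_def
  have hcpos : PosOp c := algebraMap_posOp hsm (le_of_lt (inv_pos.mpr hlam0))
  have hposc : ∀ m : ℕ, PosOp (c ^ m) := by
    intro m
    rw [hc_def, ← map_pow]
    exact algebraMap_posOp hsm (pow_nonneg (le_of_lt (inv_pos.mpr hlam0)) m)
  -- resolvent identity
  have h1 : (algebraMap ℝ (E →L[ℝ] E) lam - T) * R = 1 := by
    rw [← hu₀val]
    exact u₀.mul_inv
  have h2 : algebraMap ℝ (E →L[ℝ] E) lam * R = 1 + T * R := by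
    rw [sub_mul] at h1
    rw [sub_eq_iff_eq_add] at h1
    exact h1
  have hcl : c * algebraMap ℝ (E →L[ℝ] E) lam = 1 := by
    rw [hc_def, ← map_mul, inv_mul_cancel₀ hlamne, map_one]
  have hRid : R = c + c * (T * R) := by
    have h3 := congrArg (fun x => c * x) h2
    rw [← mul_assoc, hcl, one_mul, mul_add, mul_one] at h3
    exact h3
  set S : ℕ → E →L[ℝ] E := fun N => ∑ j ∈ Finset.range N, c ^ (j + 1) * T ^ j with hS_def
  have hSpos : ∀ N, PosOp (S N) := by
    intro N
    apply PosOp.sum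
    intro j _
    exact (hposc (j + 1)).mul (hT.pow j)
  have hcT : Commute c T := Algebra.commutes lam⁻¹ T
  have hSsucc : ∀ N, S (N + 1) = c + c * (T * S N) := by
    intro N
    rw [hS_def]
    simp only
    rw [Finset.sum_range_succ']
    have hf0 : c ^ (0 + 1) * T ^ 0 = c := by rw [pow_one, pow_zero, mul_one]
    rw [hf0, Finset.mul_sum, Finset.mul_sum]
    rw [add_comm]
    congr 1
    apply Finset.sum_congr rfl
    intro j _
    rw [← mul_assoc T, ← (hcT.pow_left (j + 1)).eq, mul_assoc (c ^ (j+1)), ← pow_succ' T j,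
      ← mul_assoc, ← pow_succ' c (j+1)]
  have hInd : ∀ N, PosOp (R - S N) := by
    intro N
    induction N with
    | zero =>
      have : S 0 = 0 := by rw [hS_def]; simp
      rw [this, sub_zero]
      exact hRpos
    | succ N ih =>
      have hstep : R - S (N + 1) = c * (T * (R - S N)) := by
        rw [hSsucc N]
        conv_lhs => rw [hRid]
        rw [mul_sub T R (S N), mul_sub c]
        abel
      rw [hstep]
      exact hcpos.mul (hT.mul ih)
  have hTj : ∀ j : ℕ, ‖T ^ j‖ ≤ lam ^ (j + 1) * ‖R‖ := by
    intro j
    have hA : PosOp (c ^ (j + 1) * T ^ j) := (hposc (j + 1)).mul (hT.pow j)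
    have hle : ∀ f, 0 ≤ f → (c ^ (j + 1) * T ^ j) f ≤ R f := by
      intro f hf
      have ha := hInd (j + 1) f hf
      rw [ContinuousLinearMap.sub_apply] at ha
      have hb : S (j + 1) f ≤ R f := sub_nonneg.mp ha
      have hc2 : S (j + 1) = S j + c ^ (j + 1) * T ^ j := by
        rw [hS_def]
        simp only
        rw [Finset.sum_range_succ]
      have hd2 : (c ^ (j + 1) * T ^ j) f ≤ S (j + 1) f := by
        rw [hc2, ContinuousLinearMap.add_apply]
        have := hSpos j f hf
        exact le_add_of_nonneg_left this
      exact le_trans hd2 hb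
    have hnorm1 : ‖c ^ (j + 1) * T ^ j‖ ≤ ‖R‖ := PosOp.opNorm_le hA hRpos hle
    have hid : algebraMap ℝ (E →L[ℝ] E) (lam ^ (j + 1)) * c ^ (j + 1) = 1 := by
      rw [hc_def, ← map_pow, ← map_mul, ← mul_pow, mul_inv_cancel₀ hlamne, one_pow, map_one]
    have hTj_eq : T ^ j = algebraMap ℝ (E →L[ℝ] E) (lam ^ (j + 1)) * (c ^ (j + 1) * T ^ j) := by
      rw [← mul_assoc, hid, one_mul]
    calc ‖T ^ j‖ = ‖algebraMap ℝ (E →L[ℝ] E) (lam ^ (j + 1)) * (c ^ (j + 1) * T ^ j)‖ := by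
          rw [← hTj_eq]
    _ ≤ ‖algebraMap ℝ (E →L[ℝ] E) (lam ^ (j + 1))‖ * ‖c ^ (j + 1) * T ^ j‖ := norm_mul_le _ _
    _ = lam ^ (j + 1) * ‖c ^ (j + 1) * T ^ j‖ := by
          rw [norm_algebraMap', Real.norm_eq_abs, abs_of_pos (pow_pos hlam0 _)]
    _ ≤ lam ^ (j + 1) * ‖R‖ :=
          mul_le_mul_of_nonneg_left hnorm1 (le_of_lt (pow_pos hlam0 _))
  obtain ⟨k, hk, hkgt⟩ := hnear (r - lam) (by linarith)
  have hklam : lam < |k| := by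
    rw [show r - (r - lam) = lam by ring] at hkgt
    exact hkgt
  have hnormk : ∀ j : ℕ, |k| ^ j ≤ lam ^ (j + 1) * ‖R‖ := by
    intro j
    have ha := spectrum.norm_le_norm_of_mem (pow_mem_spectrum_pow T hk j)
    rw [norm_pow, Real.norm_eq_abs] at ha
    exact le_trans ha (hTj j)
  have hratio : ∀ j : ℕ, (|k| / lam) ^ j ≤ lam * ‖R‖ := by
    intro j
    rw [div_pow, div_le_iff₀ (pow_pos hlam0 j)]
    calc |k| ^ j ≤ lam ^ (j + 1) * ‖R‖ := hnormk j
    _ = lam * ‖R‖ * lam ^ j := by ring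
  have hgt1 : 1 < |k| / lam := (one_lt_div hlam0).mpr hklam
  obtain ⟨j, hj⟩ := ((tendsto_pow_atTop_atTop_of_one_lt hgt1).eventually_gt_atTop
    (lam * ‖R‖)).exists
  linarith [hratio j]

end Pringsheim
section KreinRutman

variable {E : Type*} [NormedAddCommGroup E] [Lattice E] [HasSolidNorm E] [IsOrderedAddMonoid E] [NormedSpace ℝ E] [CompleteSpace E]
  [Nontrivial E]

theorem alg_apply (a : ℝ) (x : E) : (algebraMap ℝ (E →L[ℝ] E) a) x = a • x := by
  rw [Algebra.algebraMap_eq_smul_one]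
  rfl

theorem krein_rutman_abstract
    (hsm : ∀ (c : ℝ) (f : E), 0 ≤ c → 0 ≤ f → 0 ≤ c • f)
    (T : E →L[ℝ] E) (hT : PosOp T)
    (hcpt : ∃ n : ℕ, 1 ≤ n ∧ IsCompactOperator ⇑(T ^ n))
    (hr : 0 < spectralRadius ℝ T) :
    ∃ v : E, ‖v‖ = 1 ∧ 0 ≤ v ∧ T v = (spectralRadius ℝ T).toReal • v := by
  have hfin : spectralRadius ℝ T ≠ ⊤ :=
    ne_top_of_le_ne_top ENNReal.coe_ne_top (spectrum.spectralRadius_le_nnnorm T)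
  set r : ℝ := (spectralRadius ℝ T).toReal with hr_def
  have hr0 : 0 < r := ENNReal.toReal_pos (ne_of_gt hr) hfin
  have hcoer : spectralRadius ℝ T = ENNReal.ofReal r := by
    rw [hr_def, ENNReal.ofReal_toReal hfin]
  have hksr : ∀ k ∈ spectrum ℝ T, (‖k‖₊ : ℝ≥0∞) ≤ spectralRadius ℝ T := by
    intro k hk
    exact le_iSup₂ (f := fun k (_ : k ∈ spectrum ℝ T) => (‖k‖₊ : ℝ≥0∞)) k hk
  have hspec : ∀ k ∈ spectrum ℝ T, |k| ≤ r := by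
    intro k hk
    have h1 := ENNReal.toReal_mono hfin (hksr k hk)
    rwa [ENNReal.coe_toReal, coe_nnnorm, Real.norm_eq_abs] at h1
  have hnear : ∀ ε : ℝ, 0 < ε → ∃ k ∈ spectrum ℝ T, r - ε < |k| := by
    intro ε hε
    have hy : ENNReal.ofReal (r - ε) < spectralRadius ℝ T := by
      rcases le_or_gt (r - ε) 0 with h | h
      · rw [ENNReal.ofReal_eq_zero.mpr h]; exact hr
      · rw [hcoer]
        exact (ENNReal.ofReal_lt_ofReal_iff hr0).mpr (by linarith)
    have hy2 : ENNReal.ofReal (r - ε) < ⨆ k ∈ spectrum ℝ T, (‖k‖₊ : ℝ≥0∞) := hy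
    rw [lt_iSup_iff] at hy2
    obtain ⟨k, hk2⟩ := hy2
    by_cases hkmem : k ∈ spectrum ℝ T
    · rw [iSup_pos hkmem] at hk2
      refine ⟨k, hkmem, ?_⟩
      by_contra hcon
      push_neg at hcon
      have : (‖k‖₊ : ℝ≥0∞) ≤ ENNReal.ofReal (r - ε) := by
        rw [show (‖k‖₊ : ℝ≥0∞) = ENNReal.ofReal ‖k‖ from (ofReal_norm k).symm]
        exact ENNReal.ofReal_le_ofReal (by rwa [Real.norm_eq_abs])
      exact absurd (lt_of_lt_of_le hk2 this) (lt_irrefl _)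
    · rw [iSup_neg hkmem] at hk2
      exact absurd hk2 (by simp)
  have posR := resolvent_pos_of_gt hsm T hT hr0 hspec
  have hrmem := r_mem_spectrum hsm T hT hr0 hspec hnear
  have hnotunit : ¬IsUnit (algebraMap ℝ (E →L[ℝ] E) r - T) := spectrum.mem_iff.mp hrmem
  -- lower bound on resolvent norm
  have hlow : ∀ lam : ℝ, r < lam → ∀ u : (E →L[ℝ] E)ˣ,
      (↑u : E →L[ℝ] E) = algebraMap ℝ (E →L[ℝ] E) lam - T →
      (lam - r)⁻¹ ≤ ‖(↑u⁻¹ : E →L[ℝ] E)‖ := by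
    intro lam hlam u huval
    by_contra hcon
    push_neg at hcon
    have hcond : ‖(↑u⁻¹ : E →L[ℝ] E)‖ * |lam - r| < 1 := by
      rw [abs_of_pos (by linarith)]
      rw [← inv_mul_cancel₀ (ne_of_gt (show (0:ℝ) < lam - r by linarith))]
      exact mul_lt_mul_of_pos_right hcon (by linarith)
    obtain ⟨w, hwval, _, _⟩ := perturb_unit u (lam - r) hcond
    apply hnotunit
    refine ⟨w, ?_⟩
    rw [hwval, huval, map_sub]
    abel
  -- approximate positive eigenvectors
  have hseq : ∀ l : ℕ, ∃ v : E, 0 ≤ v ∧ ‖v‖ = 1 ∧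
      ‖T v - r • v‖ ≤ 3 * ((l : ℝ) + 1)⁻¹ := by
    intro l
    set ε : ℝ := ((l : ℝ) + 1)⁻¹ with hε_def
    have hε0 : 0 < ε := by positivity
    obtain ⟨u, huval, hupos⟩ := posR (r + ε) (by linarith)
    have hlowu : ε⁻¹ ≤ ‖(↑u⁻¹ : E →L[ℝ] E)‖ := by
      have := hlow (r + ε) (by linarith) u huval
      rwa [add_sub_cancel_left] at this
    have hhalf : ε⁻¹ / 2 < ‖(↑u⁻¹ : E →L[ℝ] E)‖ := by
      have : ε⁻¹ / 2 < ε⁻¹ := by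
        have : 0 < ε⁻¹ := inv_pos.mpr hε0
        linarith
      linarith
    obtain ⟨f, hf1, hf2⟩ := ContinuousLinearMap.exists_lt_apply_of_lt_opNorm _ hhalf
    have hgpos : (0:E) ≤ |f| := abs_nonneg f
    have hgnorm : ‖|f|‖ ≤ 1 := by rw [norm_abs_eq_norm]; exact le_of_lt hf1
    have hRg : ε⁻¹ / 2 < ‖(↑u⁻¹ : E →L[ℝ] E) (|f|)‖ :=
      lt_of_lt_of_le hf2 (hupos.norm_apply_le f)
    have hclpos : 0 < ‖(↑u⁻¹ : E →L[ℝ] E) (|f|)‖ := lt_trans (by positivity) hRg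
    set g : E := |f| with hg_def
    set cl : ℝ := ‖(↑u⁻¹ : E →L[ℝ] E) g‖ with hcl_def
    set v : E := cl⁻¹ • ((↑u⁻¹ : E →L[ℝ] E) g) with hv_def
    have hv0 : 0 ≤ v := hsm _ _ (le_of_lt (inv_pos.mpr hclpos)) (hupos g hgpos)
    have hvnorm : ‖v‖ = 1 := by
      rw [hv_def]
      have h := norm_smul cl⁻¹ ((↑u⁻¹ : E →L[ℝ] E) g)
      rw [Real.norm_eq_abs, abs_of_pos (inv_pos.mpr hclpos), ← hcl_def,
        inv_mul_cancel₀ (ne_of_gt hclpos)] at h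
      exact h
    have happ : (algebraMap ℝ (E →L[ℝ] E) (r + ε) - T) ((↑u⁻¹ : E →L[ℝ] E) g) = g := by
      have h1 : (algebraMap ℝ (E →L[ℝ] E) (r + ε) - T) * (↑u⁻¹ : E →L[ℝ] E) = 1 := by
        rw [← huval]; exact u.mul_inv
      calc (algebraMap ℝ (E →L[ℝ] E) (r + ε) - T) ((↑u⁻¹ : E →L[ℝ] E) g)
          = ((algebraMap ℝ (E →L[ℝ] E) (r + ε) - T) * (↑u⁻¹ : E →L[ℝ] E)) g := rfl
      _ = (1 : E →L[ℝ] E) g := by rw [h1]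
      _ = g := rfl
    have hTRg : T ((↑u⁻¹ : E →L[ℝ] E) g) = (r + ε) • ((↑u⁻¹ : E →L[ℝ] E) g) - g := by
      have h2 : (algebraMap ℝ (E →L[ℝ] E) (r + ε)) ((↑u⁻¹ : E →L[ℝ] E) g)
          - T ((↑u⁻¹ : E →L[ℝ] E) g) = g := by
        rw [← ContinuousLinearMap.sub_apply]
        exact happ
      rw [alg_apply] at h2
      have h3 : T ((↑u⁻¹ : E →L[ℝ] E) g) = (r + ε) • ((↑u⁻¹ : E →L[ℝ] E) g)
          - ((r + ε) • ((↑u⁻¹ : E →L[ℝ] E) g) - T ((↑u⁻¹ : E →L[ℝ] E) g)) :=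
        (sub_sub_cancel _ _).symm
      rw [h2] at h3
      exact h3
    have hTv : T v = (r + ε) • v - cl⁻¹ • g := by
      rw [hv_def, _root_.map_smul, hTRg, smul_sub, smul_comm]
    have hTvr : T v - r • v = ε • v - cl⁻¹ • g := by
      rw [hTv]
      rw [show ((r + ε) • v : E) = r • v + ε • v by rw [← add_smul]]
      abel
    refine ⟨v, hv0, hvnorm, ?_⟩
    rw [hTvr]
    have hcl_inv : cl⁻¹ ≤ 2 * ε := by
      have h1 : ε⁻¹ / 2 < cl := hRg
      have h2 : (2 * ε)⁻¹ < cl := by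
        rw [mul_inv]
        rw [show (ε⁻¹ / 2 : ℝ) = 2⁻¹ * ε⁻¹ by ring] at h1
        exact h1
      have := inv_strictAnti₀ (by positivity) h2
      rw [inv_inv] at this
      exact le_of_lt this
    calc ‖ε • v - cl⁻¹ • g‖ ≤ ‖ε • v‖ + ‖cl⁻¹ • g‖ := norm_sub_le _ _
    _ ≤ ε * 1 + cl⁻¹ * 1 := by
        apply add_le_add
        · have h := norm_smul ε v
          rw [Real.norm_eq_abs, abs_of_pos hε0, hvnorm] at h
          rw [h]
        · have h := norm_smul cl⁻¹ g
          rw [Real.norm_eq_abs, abs_of_pos (inv_pos.mpr hclpos)] at h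
          rw [h]
          exact mul_le_mul_of_nonneg_left hgnorm (le_of_lt (inv_pos.mpr hclpos))
    _ ≤ ε + 2 * ε := by rw [mul_one, mul_one]; exact add_le_add_right hcl_inv ε
    _ = 3 * ε := by ring
  -- pick the sequence
  set v : ℕ → E := fun l => (hseq l).choose with hv_def
  have hv0 : ∀ l, 0 ≤ v l := fun l => (hseq l).choose_spec.1
  have hvnorm : ∀ l, ‖v l‖ = 1 := fun l => (hseq l).choose_spec.2.1
  have hvbound : ∀ l, ‖T (v l) - r • v l‖ ≤ 3 * ((l : ℝ) + 1)⁻¹ :=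
    fun l => (hseq l).choose_spec.2.2
  have hd : Filter.Tendsto (fun l => T (v l) - r • v l) Filter.atTop (nhds 0) := by
    apply squeeze_zero_norm hvbound
    have h1 : Filter.Tendsto (fun l : ℕ => ((l : ℝ) + 1)⁻¹) Filter.atTop (nhds 0) :=
      tendsto_one_div_add_atTop_nhds_zero_nat.congr (by intro n; rw [one_div])
    have h2 := h1.const_mul (3 : ℝ)
    rwa [mul_zero] at h2
  -- powers
  have hpowdiff : ∀ k : ℕ, Filter.Tendsto (fun l => (T ^ k) (v l) - (r ^ k) • v l)
      Filter.atTop (nhds 0) := by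
    intro k
    induction k with
    | zero =>
      simp only [pow_zero, ContinuousLinearMap.one_apply, one_smul, sub_self]
      exact tendsto_const_nhds
    | succ k ih =>
      have heq : ∀ l, (T ^ (k+1)) (v l) - (r ^ (k+1)) • v l
          = T ((T ^ k) (v l) - (r ^ k) • v l) + (r ^ k) • (T (v l) - r • v l) := by
        intro l
        have h1 : (T ^ (k+1)) (v l) = T ((T ^ k) (v l)) := by
          rw [pow_succ' T k]
          rfl
        have h2 : ((r : ℝ) ^ (k+1)) • v l = (r ^ k) • (r • v l) := by
          rw [smul_smul, ← pow_succ r k]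
        rw [h1, h2, map_sub, _root_.map_smul, smul_sub]
        abel
      have hlim1 : Filter.Tendsto (fun l => T ((T ^ k) (v l) - (r ^ k) • v l))
          Filter.atTop (nhds 0) := by
        have := (T.continuous.tendsto 0).comp ih
        rwa [map_zero] at this
      have hlim2 : Filter.Tendsto (fun l => (r ^ k) • (T (v l) - r • v l))
          Filter.atTop (nhds 0) := by
        have := hd.const_smul (r ^ k)
        rwa [smul_zero] at this
      have := hlim1.add hlim2
      rw [add_zero] at this
      exact this.congr (fun l => (heq l).symm)
  -- compactness
  obtain ⟨n, hn1, hK⟩ := hcpt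
  have hKc : IsCompact (closure (⇑(T ^ n) '' Metric.closedBall 0 1)) := by
    have h := IsCompactOperator.isCompact_closure_image_closedBall
      (f := (T ^ n).toLinearMap) hK 1
    exact h
  have hmem : ∀ l, (T ^ n) (v l) ∈ closure (⇑(T ^ n) '' Metric.closedBall 0 1) := by
    intro l
    apply subset_closure
    exact Set.mem_image_of_mem _ (by rw [Metric.mem_closedBall, dist_zero_right, hvnorm])
  obtain ⟨w, hwK, φ, hφmono, hφtend⟩ := hKc.tendsto_subseq hmem
  have hsubdiff : Filter.Tendsto (fun l => (T ^ n) (v (φ l)) - (r ^ n) • v (φ l))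
      Filter.atTop (nhds 0) := (hpowdiff n).comp hφmono.tendsto_atTop
  have hrn : Filter.Tendsto (fun l => (r ^ n) • v (φ l)) Filter.atTop (nhds w) := by
    have h := hφtend.sub hsubdiff
    rw [sub_zero] at h
    exact h.congr (fun l => sub_sub_cancel _ _)
  have hrne : (r : ℝ) ^ n ≠ 0 := ne_of_gt (pow_pos hr0 n)
  set vinf : E := (r ^ n)⁻¹ • w with hvinf_def
  have hvconv : Filter.Tendsto (fun l => v (φ l)) Filter.atTop (nhds vinf) := by
    have h := hrn.const_smul ((r ^ n)⁻¹)
    refine h.congr (fun l => ?_)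
    rw [smul_smul, inv_mul_cancel₀ hrne, one_smul]
  have hvinf_norm : ‖vinf‖ = 1 := by
    have h1 : Filter.Tendsto (fun l => ‖v (φ l)‖) Filter.atTop (nhds ‖vinf‖) := hvconv.norm
    have h2 : Filter.Tendsto (fun l => ‖v (φ l)‖) Filter.atTop (nhds 1) := by
      refine tendsto_const_nhds.congr (fun l => ?_)
      rw [hvnorm]
    exact tendsto_nhds_unique h1 h2
  have hvinf_pos : 0 ≤ vinf := by
    refine IsClosed.mem_of_tendsto isClosed_nonneg hvconv ?_
    filter_upwards with l
    exact hv0 (φ l)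
  have hvinf_eig : T vinf = r • vinf := by
    have h1 : Filter.Tendsto (fun l => T (v (φ l))) Filter.atTop (nhds (T vinf)) :=
      (T.continuous.tendsto vinf).comp hvconv
    have h2 : Filter.Tendsto (fun l => T (v (φ l))) Filter.atTop (nhds (r • vinf)) := by
      have ha : Filter.Tendsto (fun l => T (v (φ l)) - r • v (φ l)) Filter.atTop (nhds 0) :=
        hd.comp hφmono.tendsto_atTop
      have hb : Filter.Tendsto (fun l => r • v (φ l)) Filter.atTop (nhds (r • vinf)) :=
        hvconv.const_smul r
      have hc := ha.add hb
      rw [zero_add] at hc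
      exact hc.congr (fun l => by abel)
    exact tendsto_nhds_unique h1 h2
  exact ⟨vinf, hvinf_norm, hvinf_pos, hvinf_eig⟩

end KreinRutman
/-- existence of an a.e. strictly positive eigenfunction for the spectral radius. -/
theorem stmt2 {X : Type*} [MeasurableSpace X] {μ : Measure X} [SigmaFinite μ]
    {p : ℝ≥0∞} [Fact (1 ≤ p)] (hp : p ≠ ∞)
    (T : Lp ℝ p μ →L[ℝ] Lp ℝ p μ)
    (hpos : ∀ f : Lp ℝ p μ, 0 ≤ᵐ[μ] ⇑f → 0 ≤ᵐ[μ] ⇑(T f))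
    (hesp : ∀ f : Lp ℝ p μ, 0 ≤ᵐ[μ] ⇑f → f ≠ 0 →
      ∃ n : ℕ, 1 ≤ n ∧ ∀ᵐ x ∂μ, 0 < ((T ^ n) f : Lp ℝ p μ) x)
    (hcpt : ∃ n : ℕ, 1 ≤ n ∧ IsCompactOperator ⇑(T ^ n))
    (hr : 0 < spectralRadius ℝ T) :
    ∃ fbar : Lp ℝ p μ, fbar ≠ 0 ∧ (∀ᵐ x ∂μ, 0 < fbar x) ∧
      T fbar = (spectralRadius ℝ T).toReal • fbar := by
  haveI hnt : Nontrivial (Lp ℝ p μ) := by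
    by_contra h
    rw [not_nontrivial_iff_subsingleton] at h
    haveI : Subsingleton (Lp ℝ p μ →L[ℝ] Lp ℝ p μ) := inferInstance
    have h0 : spectralRadius ℝ T = 0 := by simp [spectralRadius]
    rw [h0] at hr
    exact lt_irrefl 0 hr
  have hsm : ∀ (c : ℝ) (f : Lp ℝ p μ), 0 ≤ c → 0 ≤ f → 0 ≤ c • f := by
    intro c f hc hf
    rw [← MeasureTheory.Lp.coeFn_nonneg]
    filter_upwards [MeasureTheory.Lp.coeFn_smul c f,
      (MeasureTheory.Lp.coeFn_nonneg f).mpr hf] with x hx1 hx2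
    rw [hx1]
    simp only [Pi.smul_apply, smul_eq_mul]
    exact mul_nonneg hc hx2
  have hT : PosOp T := by
    intro f hf
    rw [← MeasureTheory.Lp.coeFn_nonneg]
    exact hpos f ((MeasureTheory.Lp.coeFn_nonneg f).mpr hf)
  obtain ⟨v, hvnorm, hv0, heig⟩ := krein_rutman_abstract hsm T hT hcpt hr
  set r : ℝ := (spectralRadius ℝ T).toReal with hr_def
  have hfin : spectralRadius ℝ T ≠ ⊤ :=
    ne_top_of_le_ne_top ENNReal.coe_ne_top (spectrum.spectralRadius_le_nnnorm T)
  have hr0 : 0 < r := ENNReal.toReal_pos (ne_of_gt hr) hfin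
  have hvne : v ≠ 0 := by
    intro hcon
    rw [hcon, norm_zero] at hvnorm
    norm_num at hvnorm
  obtain ⟨n, hn1, hposae⟩ := hesp v ((MeasureTheory.Lp.coeFn_nonneg v).mpr hv0) hvne
  have hiter : ∀ m : ℕ, (T ^ m) v = (r ^ m) • v := by
    intro m
    induction m with
    | zero => simp
    | succ m ih =>
      calc (T ^ (m + 1)) v = (T ^ m) (T v) := by rw [pow_succ]; rfl
      _ = (T ^ m) (r • v) := by rw [heig]
      _ = r • ((T ^ m) v) := _root_.map_smul _ _ _
      _ = r • (r ^ m • v) := by rw [ih]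
      _ = (r ^ (m + 1)) • v := by rw [smul_smul, ← pow_succ']
  have hrn : (0:ℝ) < r ^ n := pow_pos hr0 n
  have hae : ∀ᵐ x ∂μ, 0 < v x := by
    have hsm_ae := MeasureTheory.Lp.coeFn_smul (r ^ n) v
    rw [hiter n] at hposae
    filter_upwards [hposae, hsm_ae] with x hx1 hx2
    rw [hx2] at hx1
    simp only [Pi.smul_apply, smul_eq_mul] at hx1
    have := mul_pos (inv_pos.mpr hrn) hx1
    rwa [← mul_assoc, inv_mul_cancel₀ (ne_of_gt hrn), one_mul] at this
  exact ⟨v, hvne, hae, heig⟩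
end

section
/- Let $T$ be a bounded positive linear operator on $L^\infty(\mu)$ such that for every $f \in L^\infty$ with $f \ge 0$ a.e. and $f \neq 0$ there exists $n \ge 1$ with $\mathrm{ess}\inf T^n f > 0$, $T^n$ is compact for some $n$, and $r(T) > 0$. Then there exists $\bar f \in L^\infty$ with $\mathrm{ess}\inf \bar f > 0$ such that $T \bar f = r(T)\bar f$, and $\bar f$ is the unique (up to positive scalar multiples) eigenfunction of $T$ in $L^\infty$ that is non-negative a.e. -/
open MeasureTheory
open Filter
open scoped ENNReal

namespace Stmt4Aux

variable {X : Type*} [MeasurableSpace X] {μ : Measure X}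

noncomputable def one (μ : Measure X) : Lp ℝ ∞ μ := (memLp_top_const (1:ℝ)).toLp _

lemma coeFn_one : ⇑(one μ) =ᵐ[μ] fun _ => (1:ℝ) := MemLp.coeFn_toLp _

lemma one_nonneg : 0 ≤ one μ := by
  rw [← Lp.coeFn_nonneg]
  filter_upwards [coeFn_one (μ := μ)] with x hx
  rw [hx]; norm_num

lemma one_ne_zero' (hμ : μ ≠ 0) : (one μ) ≠ 0 := by
  intro h
  have h2 : ⇑(one μ) =ᵐ[μ] (0 : X → ℝ) := by
    rw [h]; exact Lp.coeFn_zero _ _ _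
  have := coeFn_one (μ := μ)
  have h3 : ∀ᵐ x ∂μ, (1:ℝ) = 0 := by
    filter_upwards [h2, this] with x hx hy
    rw [← hy, hx]; rfl
  haveI : (ae μ).NeBot := ae_neBot.mpr hμ
  obtain ⟨x, hx⟩ := h3.exists
  norm_num at hx

lemma ae_le_norm (f : Lp ℝ ∞ μ) : ∀ᵐ x ∂μ, |f x| ≤ ‖f‖ := by
  have h1 : ∀ᵐ x ∂μ, (‖f x‖₊ : ℝ≥0∞) ≤ eLpNormEssSup f μ := ae_le_eLpNormEssSup
  have h2 : eLpNormEssSup (⇑f) μ ≠ ∞ := by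
    have := Lp.eLpNorm_ne_top f
    rwa [eLpNorm_exponent_top] at this
  filter_upwards [h1] with x hx
  have : (‖f x‖₊ : ℝ≥0∞).toReal ≤ (eLpNormEssSup (⇑f) μ).toReal :=
    ENNReal.toReal_mono h2 hx
  simpa [Lp.norm_def, eLpNorm_exponent_top, Real.norm_eq_abs] using this

lemma norm_le_of_ae_bound' {f : Lp ℝ ∞ μ} {C : ℝ} (hC : 0 ≤ C)
    (h : ∀ᵐ x ∂μ, |f x| ≤ C) : ‖f‖ ≤ C := by
  rw [Lp.norm_def, eLpNorm_exponent_top]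
  have : eLpNormEssSup (⇑f) μ ≤ ENNReal.ofReal C := by
    refine essSup_le_of_ae_le _ ?_
    filter_upwards [h] with x hx
    rw [← ofReal_norm]
    exact ENNReal.ofReal_le_ofReal (by simpa [Real.norm_eq_abs] using hx)
  exact le_trans (ENNReal.toReal_mono ENNReal.ofReal_ne_top this)
    (by rw [ENNReal.toReal_ofReal hC])


lemma smul_one_le_iff {c : ℝ} {f : Lp ℝ ∞ μ} :
    c • one μ ≤ f ↔ ∀ᵐ x ∂μ, c ≤ f x := by
  rw [← Lp.coeFn_le]
  constructor <;> intro h <;>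
    filter_upwards [h, Lp.coeFn_smul c (one μ), coeFn_one (μ := μ)] with x h1 h2 h3
  · rw [h2] at h1; simpa [h3] using h1
  · rw [h2]; simpa [h3] using h1

lemma le_smul_one_iff {c : ℝ} {f : Lp ℝ ∞ μ} :
    f ≤ c • one μ ↔ ∀ᵐ x ∂μ, f x ≤ c := by
  rw [← Lp.coeFn_le]
  constructor <;> intro h <;>
    filter_upwards [h, Lp.coeFn_smul c (one μ), coeFn_one (μ := μ)] with x h1 h2 h3
  · rw [h2] at h1; simpa [h3] using h1
  · rw [h2]; simpa [h3] using h1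

lemma scalar_le (hμ : μ ≠ 0) {c d : ℝ} (h : c • one μ ≤ d • one μ) : c ≤ d := by
  haveI : (ae μ).NeBot := ae_neBot.mpr hμ
  have h2 : ∀ᵐ x ∂μ, c ≤ (d • one μ : Lp ℝ ∞ μ) x := smul_one_le_iff.mp h
  have h3 : ∀ᵐ x ∂μ, c ≤ d := by
    filter_upwards [h2, Lp.coeFn_smul d (one μ), coeFn_one (μ := μ)] with x h1 h2 h3
    rw [h2] at h1; simpa [h3] using h1
  exact h3.exists.choose_spec

lemma norm_one' (hμ : μ ≠ 0) : ‖one μ‖ = 1 := by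
  haveI : (ae μ).NeBot := ae_neBot.mpr hμ
  refine le_antisymm (norm_le_of_ae_bound' zero_le_one ?_) ?_
  · filter_upwards [coeFn_one (μ := μ)] with x hx; rw [hx]; norm_num
  · by_contra h
    push_neg at h
    have h2 : ∀ᵐ x ∂μ, |(one μ : Lp ℝ ∞ μ) x| ≤ ‖one μ‖ := ae_le_norm _
    have h3 : ∀ᵐ x ∂μ, (1:ℝ) ≤ ‖one μ‖ := by
      filter_upwards [h2, coeFn_one (μ := μ)] with x h1 h4
      rw [h4] at h1; simpa using h1
    exact absurd h3.exists.choose_spec (by linarith)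

lemma norm_smul_one (hμ : μ ≠ 0) {c : ℝ} (hc : 0 ≤ c) : ‖c • one μ‖ = c := by
  rw [norm_smul, norm_one' hμ, Real.norm_eq_abs, abs_of_nonneg hc, mul_one]

lemma le_norm_smul_one (f : Lp ℝ ∞ μ) : f ≤ ‖f‖ • one μ := by
  rw [le_smul_one_iff]
  filter_upwards [ae_le_norm f] with x hx
  exact le_trans (le_abs_self _) hx

lemma neg_norm_smul_one_le (f : Lp ℝ ∞ μ) : -(‖f‖ • one μ) ≤ f := by
  have := le_norm_smul_one (-f)
  rw [norm_neg] at this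
  simpa using neg_le_neg this

lemma smul_mono {c : ℝ} (hc : 0 ≤ c) {f g : Lp ℝ ∞ μ} (h : f ≤ g) :
    c • f ≤ c • g := by
  rw [← Lp.coeFn_le] at h ⊢
  filter_upwards [h, Lp.coeFn_smul c f, Lp.coeFn_smul c g] with x h1 h2 h3
  rw [h2, h3]
  exact mul_le_mul_of_nonneg_left h1 hc

lemma essInf_pos_iff (hμ : μ ≠ 0) (f : Lp ℝ ∞ μ) :
    0 < essInf (fun x => f x) μ ↔ ∃ c : ℝ, 0 < c ∧ ∀ᵐ x ∂μ, c ≤ f x := by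
  haveI : (ae μ).NeBot := ae_neBot.mpr hμ
  have hdef : essInf (fun x => f x) μ = sSup {a : ℝ | ∀ᵐ x ∂μ, a ≤ f x} := by
    rw [essInf, liminf_eq]
  rw [hdef]
  constructor
  · intro h
    have hne : {a : ℝ | ∀ᵐ x ∂μ, a ≤ f x}.Nonempty := by
      by_contra hn
      rw [Set.not_nonempty_iff_eq_empty] at hn
      rw [hn, Real.sSup_empty] at h
      exact lt_irrefl _ h
    obtain ⟨c, hc1, hc2⟩ := exists_lt_of_lt_csSup hne h
    exact ⟨c, hc2, hc1⟩
  · rintro ⟨c, hc, hac⟩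
    have hbdd : BddAbove {a : ℝ | ∀ᵐ x ∂μ, a ≤ f x} := by
      refine ⟨‖f‖, fun a ha => ?_⟩
      have : ∀ᵐ x ∂μ, a ≤ ‖f‖ := by
        filter_upwards [ha, ae_le_norm f] with x h1 h2
        exact le_trans h1 (le_trans (le_abs_self _) h2)
      exact this.exists.choose_spec
    exact lt_of_lt_of_le hc (le_csSup hbdd hac)


lemma subsingleton_of_zero (hμ : μ = 0) : Subsingleton (Lp ℝ ∞ μ) := by
  subst hμ
  refine ⟨fun f g => ?_⟩
  apply Lp.ext (p := ∞)
  rw [Filter.EventuallyEq, ae_zero]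
  exact Filter.eventually_bot

lemma spectralRadius_eq_zero_of_zero (hμ : μ = 0) (T : Lp ℝ ∞ μ →L[ℝ] Lp ℝ ∞ μ) :
    spectralRadius ℝ T = 0 := by
  haveI := subsingleton_of_zero hμ
  haveI : Subsingleton (Lp ℝ ∞ μ →L[ℝ] Lp ℝ ∞ μ) :=
    ⟨fun A B => ContinuousLinearMap.ext fun x => Subsingleton.elim _ _⟩
  have h : spectrum ℝ T = ∅ := by
    ext k
    simp only [Set.mem_empty_iff_false, iff_false, spectrum.mem_iff]
    exact fun h => h (isUnit_of_subsingleton _)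
  rw [spectralRadius, h]
  simp


lemma norm_le_const (hμ : μ ≠ 0) {f : Lp ℝ ∞ μ} {c : ℝ} (hc : 0 ≤ c)
    (h1 : -(c • one μ) ≤ f) (h2 : f ≤ c • one μ) : ‖f‖ ≤ c := by
  apply norm_le_of_ae_bound' hc
  have h1' : ∀ᵐ x ∂μ, -c ≤ f x := by
    rw [← neg_smul] at h1
    exact smul_one_le_iff.mp h1
  filter_upwards [h1', le_smul_one_iff.mp h2] with x hx1 hx2
  exact abs_le.mpr ⟨hx1, hx2⟩

lemma smul_nonneg' {c : ℝ} (hc : 0 ≤ c) {f : Lp ℝ ∞ μ} (hf : 0 ≤ f) : 0 ≤ c • f := by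
  have := smul_mono hc hf
  rwa [smul_zero] at this

lemma smul_one_le_smul {c e : ℝ} (he : 0 < e) {f : Lp ℝ ∞ μ} (h : c • one μ ≤ e • f) :
    (c / e) • one μ ≤ f := by
  have h2 := smul_mono (inv_nonneg.mpr he.le) h
  rw [smul_smul, smul_smul, inv_mul_cancel₀ he.ne', one_smul] at h2
  rw [div_eq_inv_mul]
  exact h2

end Stmt4Aux

open Stmt4Aux in
set_option maxHeartbeats 1000000 in
/-- Perron–Frobenius on `L^∞`: existence of an eigenfunction with positive
essential infimum for the spectral radius, unique up to positive scalar multiples among a.e.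
non-negative eigenfunctions. -/
theorem stmt4 {X : Type*} [MeasurableSpace X] {μ : Measure X} [SigmaFinite μ]
    (T : Lp ℝ ∞ μ →L[ℝ] Lp ℝ ∞ μ)
    (hpos : ∀ f : Lp ℝ ∞ μ, 0 ≤ᵐ[μ] ⇑f → 0 ≤ᵐ[μ] ⇑(T f))
    (hesp : ∀ f : Lp ℝ ∞ μ, 0 ≤ᵐ[μ] ⇑f → f ≠ 0 →
      ∃ n : ℕ, 1 ≤ n ∧ 0 < essInf (fun x => ((T ^ n) f : Lp ℝ ∞ μ) x) μ)
    (hcpt : ∃ n : ℕ, 1 ≤ n ∧ IsCompactOperator ⇑(T ^ n))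
    (hr : 0 < spectralRadius ℝ T) :
    ∃ fbar : Lp ℝ ∞ μ, 0 < essInf (fun x => fbar x) μ ∧
      T fbar = (spectralRadius ℝ T).toReal • fbar ∧
      ∀ g : Lp ℝ ∞ μ, 0 ≤ᵐ[μ] ⇑g → g ≠ 0 → (∃ b : ℝ, T g = b • g) →
        ∃ c : ℝ, 0 < c ∧ g = c • fbar := by
  by_cases hμ : μ = 0
  · rw [spectralRadius_eq_zero_of_zero hμ] at hr
    exact absurd hr (lt_irrefl 0)
  haveI : (ae μ).NeBot := ae_neBot.mpr hμ
  -- basic positivity facts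
  have hTpos : ∀ f : Lp ℝ ∞ μ, 0 ≤ f → 0 ≤ T f := fun f hf =>
    (Lp.coeFn_nonneg _).mp (hpos f ((Lp.coeFn_nonneg f).mpr hf))
  have hTmono : ∀ {f g : Lp ℝ ∞ μ}, f ≤ g → T f ≤ T g := by
    intro f g h
    have := hTpos (g - f) (sub_nonneg.mpr h)
    rw [map_sub] at this
    exact sub_nonneg.mp this
  have hPn : ∀ (n : ℕ) (f : Lp ℝ ∞ μ), 0 ≤ f → 0 ≤ (T ^ n) f := by
    intro n
    induction n with
    | zero => intro f hf; simpa using hf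
    | succ n ih =>
      intro f hf
      rw [pow_succ, ContinuousLinearMap.mul_apply]
      exact ih _ (hTpos f hf)
  have hMn : ∀ (n : ℕ) {f g : Lp ℝ ∞ μ}, f ≤ g → (T ^ n) f ≤ (T ^ n) g := by
    intro n f g h
    have := hPn n (g - f) (sub_nonneg.mpr h)
    rw [map_sub] at this
    exact sub_nonneg.mp this
  -- seed from the constant function
  obtain ⟨n₀, hn₀, hc₀'⟩ := hesp (one μ) ((Lp.coeFn_nonneg _).mpr one_nonneg) (one_ne_zero' hμ)
  obtain ⟨c₀, hc₀pos, hc₀ae⟩ := (essInf_pos_iff hμ _).mp hc₀'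
  have hseed : c₀ • one μ ≤ (T ^ n₀) (one μ) := smul_one_le_iff.mpr hc₀ae
  obtain ⟨m₀, hm₀, hScpt⟩ := hcpt
  set N := n₀ * m₀ with hNdef
  have hN1 : 1 ≤ N := Nat.one_le_iff_ne_zero.mpr (Nat.mul_ne_zero (by omega) (by omega))
  set S := T ^ N with hSdef
  have hScompact : IsCompactOperator ⇑S := by
    have h1 : S = (T ^ m₀).comp (T ^ (N - m₀)) := by
      rw [hSdef, ← ContinuousLinearMap.mul_def, ← pow_add]
      congr 1
      have : m₀ ≤ N := Nat.le_mul_of_pos_left m₀ (by omega)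
      omega
    rw [h1]
    exact hScpt.comp_clm _
  have hiter : ∀ j : ℕ, (c₀ ^ j) • one μ ≤ (T ^ (n₀ * j)) (one μ) := by
    intro j
    induction j with
    | zero => simp
    | succ j ih =>
      rw [show n₀ * (j + 1) = n₀ * j + n₀ by ring, pow_add T (n₀ * j) n₀,
        ContinuousLinearMap.mul_apply]
      calc (c₀ ^ (j + 1)) • one μ = c₀ • ((c₀ ^ j) • one μ) := by
            rw [smul_smul, ← pow_succ']
        _ ≤ c₀ • ((T ^ (n₀ * j)) (one μ)) := smul_mono hc₀pos.le ih
        _ = (T ^ (n₀ * j)) (c₀ • one μ) := (ContinuousLinearMap.map_smul _ _ _).symm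
        _ ≤ (T ^ (n₀ * j)) ((T ^ n₀) (one μ)) := hMn _ hseed
  have hseedS : (c₀ ^ m₀) • one μ ≤ S (one μ) := hiter m₀
  -- the Collatz–Wielandt set
  set Lam : Set ℝ :=
    {l : ℝ | 0 ≤ l ∧ ∃ u : Lp ℝ ∞ μ, 0 ≤ u ∧ ‖u‖ = 1 ∧ l • u ≤ S u} with hLamdef
  have hone_norm := norm_one' hμ
  have hl0 : c₀ ^ m₀ ∈ Lam :=
    ⟨pow_nonneg hc₀pos.le _, one μ, one_nonneg, hone_norm, hseedS⟩
  have hLamne : Lam.Nonempty := ⟨_, hl0⟩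
  have hbdd : BddAbove Lam := by
    refine ⟨‖S‖, ?_⟩
    rintro l ⟨hl0', u, hu0, hu1, hlu⟩
    have h1 : ‖l • u‖ ≤ ‖S u‖ := by
      apply norm_le_norm_of_abs_le_abs
      rw [abs_of_nonneg (smul_nonneg' hl0' hu0),
        abs_of_nonneg (le_trans (smul_nonneg' hl0' hu0) hlu)]
      exact hlu
    have h2 := S.le_opNorm u
    rw [norm_smul, hu1, mul_one, Real.norm_eq_abs, abs_of_nonneg hl0'] at h1
    rw [hu1, mul_one] at h2
    exact le_trans h1 h2
  set lam := sSup Lam with hlamdef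
  have hlam_pos : 0 < lam :=
    lt_of_lt_of_le (pow_pos hc₀pos _) (le_csSup hbdd hl0)
  -- extract an eigenvector of S via compactness
  obtain ⟨seq, hseqmono, hseqtend, hseqmem⟩ := exists_seq_tendsto_sSup hLamne hbdd
  have hseq2 := fun j => (hseqmem j).2
  choose u hu0 hu1 hlu using hseq2
  have hKcpt : IsCompact (closure (⇑S '' Metric.closedBall 0 1)) :=
    hScompact.isCompact_closure_image_closedBall 1
  have hmem : ∀ j, S (u j) ∈ closure (⇑S '' Metric.closedBall 0 1) := fun j =>
    subset_closure ⟨u j, by rw [Metric.mem_closedBall, dist_zero_right, hu1], rfl⟩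
  obtain ⟨v, hvK, φ, hφ, hφtend⟩ := hKcpt.tendsto_subseq hmem
  have hφatTop := hφ.tendsto_atTop
  have hlim1 : Filter.Tendsto (fun j => seq (φ j) • S (u (φ j))) atTop (nhds (lam • v)) :=
    Filter.Tendsto.smul (hseqtend.comp hφatTop) hφtend
  have hlim2 : Filter.Tendsto (fun j => S (S (u (φ j)))) atTop (nhds (S v)) :=
    (S.continuous.tendsto v).comp hφtend
  have hle : ∀ j, seq (φ j) • S (u (φ j)) ≤ S (S (u (φ j))) := by
    intro j
    have := hMn N (hlu (φ j))
    rwa [ContinuousLinearMap.map_smul] at this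
  have hvineq : lam • v ≤ S v := le_of_tendsto_of_tendsto' hlim1 hlim2 hle
  have hv0 : 0 ≤ v :=
    le_of_tendsto_of_tendsto' tendsto_const_nhds hφtend fun j => hPn N _ (hu0 (φ j))
  have hvnorm : lam ≤ ‖v‖ := by
    have h1 : ∀ j, seq (φ j) ≤ ‖S (u (φ j))‖ := by
      intro j
      have h2 : ‖seq (φ j) • u (φ j)‖ ≤ ‖S (u (φ j))‖ := by
        apply norm_le_norm_of_abs_le_abs
        rw [abs_of_nonneg (smul_nonneg' (hseqmem _).1 (hu0 _)),
          abs_of_nonneg (le_trans (smul_nonneg' (hseqmem _).1 (hu0 _)) (hlu _))]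
        exact hlu _
      rwa [norm_smul, hu1, mul_one, Real.norm_eq_abs, abs_of_nonneg (hseqmem _).1] at h2
    exact le_of_tendsto_of_tendsto' (hseqtend.comp hφatTop) hφtend.norm h1
  have hvne : v ≠ 0 := by
    intro h
    rw [h, norm_zero] at hvnorm
    linarith
  -- S v = lam • v
  have heig : S v = lam • v := by
    by_contra hne
    have hd0 : 0 ≤ S v - lam • v := sub_nonneg.mpr hvineq
    have hdne : S v - lam • v ≠ 0 := fun h => hne (by rw [sub_eq_zero] at h; exact h)
    obtain ⟨p, hp1, hdp⟩ := hesp _ ((Lp.coeFn_nonneg _).mpr hd0) hdne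
    obtain ⟨δ, hδ, hδae⟩ := (essInf_pos_iff hμ _).mp hdp
    have hδle : δ • one μ ≤ (T ^ p) (S v - lam • v) := smul_one_le_iff.mpr hδae
    have hu'0 : 0 ≤ (T ^ p) v := hPn p v hv0
    have hSu' : S ((T ^ p) v) = lam • (T ^ p) v + (T ^ p) (S v - lam • v) := by
      have hcomm : S ((T ^ p) v) = (T ^ p) (S v) := by
        rw [hSdef, ← ContinuousLinearMap.mul_apply, ← ContinuousLinearMap.mul_apply,
          ← pow_add, ← pow_add, add_comm]
      rw [hcomm, map_sub, ContinuousLinearMap.map_smul]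
      abel
    have hu'ne : (T ^ p) v ≠ 0 := by
      intro h
      rw [h, map_zero, smul_zero, zero_add] at hSu'
      rw [← hSu'] at hδle
      have h2 : δ • one μ ≤ (0 : ℝ) • one μ := by rwa [zero_smul]
      have := scalar_le hμ h2
      linarith
    have hu'norm : 0 < ‖(T ^ p) v‖ := norm_pos_iff.mpr hu'ne
    have hεpos : 0 < δ / ‖(T ^ p) v‖ := div_pos hδ hu'norm
    have hstep : (lam + δ / ‖(T ^ p) v‖) • (T ^ p) v ≤ S ((T ^ p) v) := by
      have h1 : (δ / ‖(T ^ p) v‖) • (T ^ p) v ≤ δ • one μ := by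
        calc (δ / ‖(T ^ p) v‖) • (T ^ p) v
            ≤ (δ / ‖(T ^ p) v‖) • (‖(T ^ p) v‖ • one μ) :=
              smul_mono hεpos.le (le_norm_smul_one _)
          _ = δ • one μ := by rw [smul_smul, div_mul_cancel₀ _ hu'norm.ne']
      calc (lam + δ / ‖(T ^ p) v‖) • (T ^ p) v
          = lam • (T ^ p) v + (δ / ‖(T ^ p) v‖) • (T ^ p) v := add_smul _ _ _
        _ ≤ lam • (T ^ p) v + δ • one μ := add_le_add_right h1 _
        _ ≤ lam • (T ^ p) v + (T ^ p) (S v - lam • v) := add_le_add_right hδle _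
        _ = S ((T ^ p) v) := hSu'.symm
    have hmem2 : lam + δ / ‖(T ^ p) v‖ ∈ Lam := by
      refine ⟨by positivity, ‖(T ^ p) v‖⁻¹ • (T ^ p) v,
        smul_nonneg' (inv_nonneg.mpr hu'norm.le) hu'0, ?_, ?_⟩
      · rw [norm_smul, Real.norm_eq_abs, abs_of_nonneg (inv_nonneg.mpr hu'norm.le),
          inv_mul_cancel₀ hu'norm.ne']
      · rw [ContinuousLinearMap.map_smul, smul_comm]
        exact smul_mono (inv_nonneg.mpr hu'norm.le) hstep
    have := le_csSup hbdd hmem2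
    rw [← hlamdef] at this
    linarith
  -- the N-th root of lam
  set lam1 := lam ^ ((N : ℝ)⁻¹) with hlam1def
  have hlam1pos : 0 < lam1 := Real.rpow_pos_of_pos hlam_pos _
  have hNne : (N : ℝ) ≠ 0 := Nat.cast_ne_zero.mpr (by omega)
  have hlam1N : lam1 ^ N = lam := by
    rw [hlam1def, ← Real.rpow_natCast (lam ^ ((N : ℝ)⁻¹)) N, ← Real.rpow_mul hlam_pos.le,
      inv_mul_cancel₀ hNne, Real.rpow_one]
  -- the eigenfunction
  set fbar := ∑ j ∈ Finset.range N, lam1 ^ (N - 1 - j) • (T ^ j) v with hfbardef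
  have hfbar0 : 0 ≤ fbar :=
    Finset.sum_nonneg fun j _ => smul_nonneg' (pow_nonneg hlam1pos.le _) (hPn j v hv0)
  have hTfbar : T fbar = lam1 • fbar := by
    set G : ℕ → Lp ℝ ∞ μ := fun i => lam1 ^ (N - i) • (T ^ i) v with hGdef
    have h1 : T fbar = ∑ j ∈ Finset.range N, lam1 ^ (N - 1 - j) • (T ^ (j + 1)) v := by
      rw [hfbardef, map_sum]
      refine Finset.sum_congr rfl fun j _ => ?_
      rw [ContinuousLinearMap.map_smul, ← ContinuousLinearMap.mul_apply, ← pow_succ']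
    have h2 : ∀ j ∈ Finset.range N,
        lam1 ^ (N - 1 - j) • (T ^ (j + 1)) v = G (j + 1) := by
      intro j _
      simp only [hGdef]
      have he : N - 1 - j = N - (j + 1) := by omega
      rw [he]
    have h3 : G 0 = G N := by
      simp only [hGdef, Nat.sub_zero, Nat.sub_self, pow_zero, one_smul,
        ContinuousLinearMap.one_apply]
      rw [← hSdef, heig, hlam1N]
    have h4 := Finset.sum_range_succ' G N
    have h5 := Finset.sum_range_succ G N
    have h6 : ∑ j ∈ Finset.range N, G (j + 1) = ∑ i ∈ Finset.range N, G i := by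
      have h7 := h4.symm.trans h5
      rw [h3] at h7
      exact add_right_cancel h7
    rw [h1, Finset.sum_congr rfl h2, h6, hfbardef, Finset.smul_sum]
    refine Finset.sum_congr rfl fun i hi => ?_
    rw [Finset.mem_range] at hi
    simp only [hGdef]
    rw [smul_smul, ← pow_succ']
    have he : (N - 1 - i) + 1 = N - i := by omega
    rw [he]
  have hTkfbar : ∀ k : ℕ, (T ^ k) fbar = (lam1 ^ k) • fbar := by
    intro k
    induction k with
    | zero => simp
    | succ k ih =>
      rw [pow_succ, ContinuousLinearMap.mul_apply, hTfbar, ContinuousLinearMap.map_smul, ih,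
        smul_smul, ← pow_succ']
  have hfbarne : fbar ≠ 0 := by
    intro h
    have hge : lam1 ^ (N - 1) • v ≤ fbar := by
      have := Finset.single_le_sum
        (f := fun j => lam1 ^ (N - 1 - j) • (T ^ j) v)
        (fun j _ => smul_nonneg' (pow_nonneg hlam1pos.le _) (hPn j v hv0))
        (Finset.mem_range.mpr (by omega : 0 < N))
      simpa [hfbardef] using this
    rw [h] at hge
    have h2 := smul_mono (inv_nonneg.mpr (pow_nonneg hlam1pos.le (N - 1))) hge
    rw [smul_smul, inv_mul_cancel₀ (pow_pos hlam1pos _).ne', one_smul, smul_zero] at h2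
    exact hvne (le_antisymm h2 hv0)
  -- positive essential infimum
  obtain ⟨p₁, hp₁, hfp₁⟩ := hesp fbar ((Lp.coeFn_nonneg _).mpr hfbar0) hfbarne
  obtain ⟨c₁, hc₁, hc₁ae⟩ := (essInf_pos_iff hμ _).mp hfp₁
  have hαle : (c₁ / lam1 ^ p₁) • one μ ≤ fbar := by
    apply smul_one_le_smul (pow_pos hlam1pos _)
    rw [← hTkfbar]
    exact smul_one_le_iff.mpr hc₁ae
  set α := c₁ / lam1 ^ p₁ with hαdef
  have hα : 0 < α := div_pos hc₁ (pow_pos hlam1pos _)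
  have hessfbar : 0 < essInf (fun x => fbar x) μ :=
    (essInf_pos_iff hμ fbar).mpr ⟨α, hα, smul_one_le_iff.mp hαle⟩
  set β := ‖fbar‖ with hβdef
  have hβpos : 0 < β := norm_pos_iff.mpr hfbarne
  have hfbarle : fbar ≤ β • one μ := le_norm_smul_one fbar
  -- norm bounds on the powers of T
  have hTk1 : ∀ k : ℕ, (T ^ k) (one μ) ≤ ((β / α) * lam1 ^ k) • one μ := by
    intro k
    have h1 : α • (T ^ k) (one μ) ≤ (lam1 ^ k) • fbar := by
      have h2 := hMn k hαle
      rwa [ContinuousLinearMap.map_smul, hTkfbar] at h2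
    have h2 : (T ^ k) (one μ) ≤ (α⁻¹ * lam1 ^ k) • fbar := by
      have h3 := smul_mono (inv_nonneg.mpr hα.le) h1
      rwa [smul_smul, inv_mul_cancel₀ hα.ne', one_smul, smul_smul] at h3
    calc (T ^ k) (one μ) ≤ (α⁻¹ * lam1 ^ k) • fbar := h2
      _ ≤ (α⁻¹ * lam1 ^ k) • (β • one μ) :=
          smul_mono (by positivity) hfbarle
      _ = ((β / α) * lam1 ^ k) • one μ := by
          rw [smul_smul]; ring_nf
  have hnormTk : ∀ k : ℕ, ‖T ^ k‖ ≤ (β / α) * lam1 ^ k := by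
    intro k
    refine ContinuousLinearMap.opNorm_le_bound _ (by positivity) fun f => ?_
    have h1 : (T ^ k) f ≤ (‖f‖ * ((β / α) * lam1 ^ k)) • one μ := by
      calc (T ^ k) f ≤ (T ^ k) (‖f‖ • one μ) := hMn k (le_norm_smul_one f)
        _ = ‖f‖ • (T ^ k) (one μ) := ContinuousLinearMap.map_smul _ _ _
        _ ≤ ‖f‖ • (((β / α) * lam1 ^ k) • one μ) := smul_mono (norm_nonneg f) (hTk1 k)
        _ = (‖f‖ * ((β / α) * lam1 ^ k)) • one μ := smul_smul _ _ _
    have h2 : -((‖f‖ * ((β / α) * lam1 ^ k)) • one μ) ≤ (T ^ k) f := by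
      have h3 : (T ^ k) (-f) ≤ (‖f‖ * ((β / α) * lam1 ^ k)) • one μ := by
        calc (T ^ k) (-f) ≤ (T ^ k) (‖-f‖ • one μ) := hMn k (le_norm_smul_one (-f))
          _ = ‖f‖ • (T ^ k) (one μ) := by rw [norm_neg]; exact ContinuousLinearMap.map_smul _ _ _
          _ ≤ ‖f‖ • (((β / α) * lam1 ^ k) • one μ) := smul_mono (norm_nonneg f) (hTk1 k)
          _ = (‖f‖ * ((β / α) * lam1 ^ k)) • one μ := smul_smul _ _ _
      rw [map_neg] at h3
      simpa using neg_le_neg h3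
    have := norm_le_const hμ (by positivity) h2 h1
    linarith [this, mul_comm ‖f‖ ((β / α) * lam1 ^ k)]
  haveI : Nontrivial (Lp ℝ ∞ μ) := ⟨one μ, 0, one_ne_zero' hμ⟩
  have hCpos : 0 < β / α := by positivity
  have hsr_le : spectralRadius ℝ T ≤ ENNReal.ofReal lam1 := by
    have hbound : ∀ n : ℕ, spectralRadius ℝ T
        ≤ ENNReal.ofReal ((β / α) ^ (1 / ((n : ℝ) + 1)) * lam1) := by
      intro n
      have h1 := spectrum.spectralRadius_le_pow_nnnorm_pow_one_div ℝ T n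
      have hone : (‖(1 : Lp ℝ ∞ μ →L[ℝ] Lp ℝ ∞ μ)‖₊ : ℝ≥0∞) = 1 := by
        have h2 : ‖(1 : Lp ℝ ∞ μ →L[ℝ] Lp ℝ ∞ μ)‖ = 1 := by
          rw [ContinuousLinearMap.one_def, ContinuousLinearMap.norm_id]
        rw [← enorm_eq_nnnorm, ← ofReal_norm, h2, ENNReal.ofReal_one]
      rw [hone, ENNReal.one_rpow, mul_one] at h1
      have h2 : (‖T ^ (n + 1)‖₊ : ℝ≥0∞) ≤ ENNReal.ofReal ((β / α) * lam1 ^ (n + 1)) := by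
        rw [← enorm_eq_nnnorm, ← ofReal_norm]
        exact ENNReal.ofReal_le_ofReal (hnormTk (n + 1))
      have h3 := ENNReal.rpow_le_rpow h2 (by positivity : (0 : ℝ) ≤ 1 / ((n : ℝ) + 1))
      have h4 : ((β / α) * lam1 ^ (n + 1)) ^ (1 / ((n : ℝ) + 1))
          = (β / α) ^ (1 / ((n : ℝ) + 1)) * lam1 := by
        rw [Real.mul_rpow hCpos.le (by positivity)]
        congr 1
        rw [← Real.rpow_natCast lam1 (n + 1), ← Real.rpow_mul hlam1pos.le]
        rw [show ((n + 1 : ℕ) : ℝ) * (1 / ((n : ℝ) + 1)) = 1 by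
          push_cast; field_simp]
        exact Real.rpow_one lam1
      rw [ENNReal.ofReal_rpow_of_pos (by positivity), h4] at h3
      calc spectralRadius ℝ T ≤ (‖T ^ (n + 1)‖₊ : ℝ≥0∞) ^ (1 / ((n : ℝ) + 1)) := by
            convert h1 using 2 <;> push_cast <;> ring
        _ ≤ ENNReal.ofReal ((β / α) ^ (1 / ((n : ℝ) + 1)) * lam1) := h3
    have htends : Filter.Tendsto
        (fun n : ℕ => ENNReal.ofReal ((β / α) ^ (1 / ((n : ℝ) + 1)) * lam1)) atTop
        (nhds (ENNReal.ofReal lam1)) := by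
      have h2 : Filter.Tendsto (fun n : ℕ => 1 / ((n : ℝ) + 1)) atTop (nhds 0) :=
        tendsto_one_div_add_atTop_nhds_zero_nat
      have h3 : Filter.Tendsto (fun n : ℕ => (β / α) ^ (1 / ((n : ℝ) + 1))) atTop (nhds 1) := by
        have h4 : Filter.Tendsto (fun n : ℕ => Real.log (β / α) * (1 / ((n : ℝ) + 1)))
            atTop (nhds 0) := by
          simpa using h2.const_mul (Real.log (β / α))
        have h5 := (Real.continuous_exp.tendsto 0).comp h4
        rw [Real.exp_zero] at h5
        refine h5.congr fun n => ?_
        rw [Function.comp_apply, ← Real.rpow_def_of_pos hCpos]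
      have h6 := h3.mul_const lam1
      rw [one_mul] at h6
      exact ENNReal.tendsto_ofReal h6
    exact ge_of_tendsto' htends hbound
  have hmem_spec : lam1 ∈ spectrum ℝ T := by
    rw [spectrum.mem_iff]
    intro hunit
    have h0 : (algebraMap ℝ (Lp ℝ ∞ μ →L[ℝ] Lp ℝ ∞ μ) lam1 - T) fbar = 0 := by
      rw [ContinuousLinearMap.sub_apply, hTfbar, Algebra.algebraMap_eq_smul_one,
        ContinuousLinearMap.smul_apply, ContinuousLinearMap.one_apply, sub_self]
    obtain ⟨B, hB⟩ := hunit.exists_left_inv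
    have h3 := congrArg (fun A : Lp ℝ ∞ μ →L[ℝ] Lp ℝ ∞ μ => A fbar) hB
    simp only [ContinuousLinearMap.mul_apply, ContinuousLinearMap.one_apply] at h3
    rw [h0, map_zero] at h3
    exact hfbarne h3.symm
  have hsr_ge : ENNReal.ofReal lam1 ≤ spectralRadius ℝ T := by
    have h1 : ENNReal.ofReal lam1 = (‖lam1‖₊ : ℝ≥0∞) := by
      rw [← enorm_eq_nnnorm, ← ofReal_norm, Real.norm_eq_abs, abs_of_pos hlam1pos]
    rw [h1, spectralRadius]
    exact le_iSup₂ (f := fun k (_ : k ∈ spectrum ℝ T) => (‖k‖₊ : ℝ≥0∞)) lam1 hmem_spec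
  have hsr_toReal : (spectralRadius ℝ T).toReal = lam1 := by
    rw [le_antisymm hsr_le hsr_ge, ENNReal.toReal_ofReal hlam1pos.le]
  refine ⟨fbar, hessfbar, by rw [hsr_toReal]; exact hTfbar, ?_⟩
  rintro g hg0ae hgne ⟨b, hb⟩
  have hg0 : 0 ≤ g := (Lp.coeFn_nonneg _).mp hg0ae
  have hTkg : ∀ k : ℕ, (T ^ k) g = (b ^ k) • g := by
    intro k
    induction k with
    | zero => simp
    | succ k ih =>
      rw [pow_succ, ContinuousLinearMap.mul_apply, hb, ContinuousLinearMap.map_smul, ih,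
        smul_smul, ← pow_succ']
  obtain ⟨p₂, hp₂, hgp₂⟩ := hesp g hg0ae hgne
  obtain ⟨c₂, hc₂, hc₂ae⟩ := (essInf_pos_iff hμ _).mp hgp₂
  have h1 : c₂ • one μ ≤ (b ^ p₂) • g := by
    rw [← hTkg]
    exact smul_one_le_iff.mpr hc₂ae
  have hbpos : 0 < b := by
    rcases lt_trichotomy b 0 with hb1 | hb1 | hb1
    · exfalso
      have h2 : 0 ≤ T g := hTpos g hg0
      rw [hb] at h2
      have h4 : 0 ≤ (-b) • g := smul_nonneg' (by linarith) hg0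
      rw [neg_smul] at h4
      have h5 : b • g = 0 := le_antisymm (neg_nonneg.mp h4) h2
      have h6 : g = 0 := by
        have h7 := congrArg (fun z : Lp ℝ ∞ μ => b⁻¹ • z) h5
        simpa [smul_smul, inv_mul_cancel₀ (ne_of_lt hb1)] using h7
      exact hgne h6
    · exfalso
      rw [hb1, zero_pow (by omega : p₂ ≠ 0), zero_smul] at h1
      have h2 : c₂ • one μ ≤ (0 : ℝ) • one μ := by rwa [zero_smul]
      linarith [scalar_le hμ h2]
    · exact hb1
  have hα₂le : (c₂ / b ^ p₂) • one μ ≤ g := smul_one_le_smul (pow_pos hbpos _) h1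
  set α₂ := c₂ / b ^ p₂ with hα₂def
  have hα₂ : 0 < α₂ := div_pos hc₂ (pow_pos hbpos _)
  have hgle : g ≤ ‖g‖ • one μ := le_norm_smul_one g
  have hgnorm : 0 < ‖g‖ := norm_pos_iff.mpr hgne
  have hcomp1 : ∀ k : ℕ, α₂ * b ^ k ≤ (‖g‖ * (β / α)) * lam1 ^ k := by
    intro k
    have h2 : (α₂ * b ^ k) • one μ ≤ ((‖g‖ * (β / α)) * lam1 ^ k) • one μ := by
      calc (α₂ * b ^ k) • one μ = (b ^ k) • (α₂ • one μ) := by rw [smul_smul]; ring_nf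
        _ ≤ (b ^ k) • g := smul_mono (pow_nonneg hbpos.le _) hα₂le
        _ = (T ^ k) g := (hTkg k).symm
        _ ≤ (T ^ k) (‖g‖ • one μ) := hMn k hgle
        _ = ‖g‖ • (T ^ k) (one μ) := ContinuousLinearMap.map_smul _ _ _
        _ ≤ ‖g‖ • (((β / α) * lam1 ^ k) • one μ) := smul_mono hgnorm.le (hTk1 k)
        _ = ((‖g‖ * (β / α)) * lam1 ^ k) • one μ := by rw [smul_smul]; ring_nf
    exact scalar_le hμ h2
  have hcomp2 : ∀ k : ℕ, α * lam1 ^ k ≤ ((β / α₂) * ‖g‖) * b ^ k := by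
    intro k
    have hfg : fbar ≤ (β / α₂) • g := by
      calc fbar ≤ β • one μ := hfbarle
        _ = (β / α₂) • (α₂ • one μ) := by rw [smul_smul]; congr 1; field_simp
        _ ≤ (β / α₂) • g := smul_mono (div_nonneg hβpos.le hα₂.le) hα₂le
    have h2 : (α * lam1 ^ k) • one μ ≤ (((β / α₂) * ‖g‖) * b ^ k) • one μ := by
      calc (α * lam1 ^ k) • one μ = (lam1 ^ k) • (α • one μ) := by rw [smul_smul]; ring_nf
        _ ≤ (lam1 ^ k) • fbar := smul_mono (pow_nonneg hlam1pos.le _) hαle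
        _ = (T ^ k) fbar := (hTkfbar k).symm
        _ ≤ (T ^ k) ((β / α₂) • g) := hMn k hfg
        _ = (β / α₂) • (T ^ k) g := ContinuousLinearMap.map_smul _ _ _
        _ = (β / α₂) • ((b ^ k) • g) := by rw [hTkg]
        _ ≤ (β / α₂) • ((b ^ k) • (‖g‖ • one μ)) :=
            smul_mono (div_nonneg hβpos.le hα₂.le)
              (smul_mono (pow_nonneg hbpos.le _) hgle)
        _ = (((β / α₂) * ‖g‖) * b ^ k) • one μ := by rw [smul_smul, smul_smul]; ring_nf
    exact scalar_le hμ h2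
  have hble : b ≤ lam1 := by
    by_contra hcon
    push_neg at hcon
    have hq : 1 < b / lam1 := (one_lt_div hlam1pos).mpr hcon
    obtain ⟨k, hk⟩ := pow_unbounded_of_one_lt ((‖g‖ * (β / α)) / α₂) hq
    have h2 := hcomp1 k
    rw [div_pow] at hk
    have h3 : (‖g‖ * (β / α)) / α₂ * lam1 ^ k < b ^ k / lam1 ^ k * lam1 ^ k :=
      (mul_lt_mul_iff_left₀ (pow_pos hlam1pos k)).mpr hk
    rw [div_mul_cancel₀ _ (pow_pos hlam1pos k).ne'] at h3
    have h4 : (‖g‖ * (β / α)) * lam1 ^ k < α₂ * b ^ k := by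
      have h5 := (mul_lt_mul_iff_right₀ hα₂).mpr h3
      calc (‖g‖ * (β / α)) * lam1 ^ k = α₂ * ((‖g‖ * (β / α)) / α₂ * lam1 ^ k) := by
            field_simp
        _ < α₂ * b ^ k := h5
    linarith
  have hlam1le : lam1 ≤ b := by
    by_contra hcon
    push_neg at hcon
    have hq : 1 < lam1 / b := (one_lt_div hbpos).mpr hcon
    obtain ⟨k, hk⟩ := pow_unbounded_of_one_lt (((β / α₂) * ‖g‖) / α) hq
    have h2 := hcomp2 k
    rw [div_pow] at hk
    have h3 : ((β / α₂) * ‖g‖) / α * b ^ k < lam1 ^ k / b ^ k * b ^ k :=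
      (mul_lt_mul_iff_left₀ (pow_pos hbpos k)).mpr hk
    rw [div_mul_cancel₀ _ (pow_pos hbpos k).ne'] at h3
    have h4 : ((β / α₂) * ‖g‖) * b ^ k < α * lam1 ^ k := by
      have h5 := (mul_lt_mul_iff_right₀ hα).mpr h3
      calc ((β / α₂) * ‖g‖) * b ^ k = α * (((β / α₂) * ‖g‖) / α * b ^ k) := by
            field_simp
        _ < α * lam1 ^ k := h5
    linarith
  have hbeq : b = lam1 := le_antisymm hble hlam1le
  set Γ := {t : ℝ | t • fbar ≤ g} with hΓdef
  have ht₀mem : α₂ / β ∈ Γ := by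
    show (α₂ / β) • fbar ≤ g
    calc (α₂ / β) • fbar ≤ (α₂ / β) • (β • one μ) :=
          smul_mono (div_nonneg hα₂.le hβpos.le) hfbarle
      _ = α₂ • one μ := by rw [smul_smul]; congr 1; field_simp
      _ ≤ g := hα₂le
  have hΓne : Γ.Nonempty := ⟨_, ht₀mem⟩
  have hΓbdd : BddAbove Γ := by
    refine ⟨‖g‖ / α, fun t ht => ?_⟩
    rcases le_or_gt t 0 with h | h
    · exact le_trans h (div_nonneg (norm_nonneg g) hα.le)
    · have h2 : (t * α) • one μ ≤ ‖g‖ • one μ := by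
        calc (t * α) • one μ = t • (α • one μ) := by rw [smul_smul]
          _ ≤ t • fbar := smul_mono h.le hαle
          _ ≤ g := ht
          _ ≤ ‖g‖ • one μ := hgle
      rw [le_div_iff₀ hα]
      exact scalar_le hμ h2
  set cg := sSup Γ with hcgdef
  have hcgpos : 0 < cg := lt_of_lt_of_le (div_pos hα₂ hβpos) (le_csSup hΓbdd ht₀mem)
  have hcgle : cg • fbar ≤ g := by
    obtain ⟨ts, _, htend, htmem⟩ := exists_seq_tendsto_sSup hΓne hΓbdd
    exact le_of_tendsto_of_tendsto' (htend.smul_const fbar) tendsto_const_nhds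
      fun j => htmem j
  by_cases hhne : g - cg • fbar = 0
  · exact ⟨cg, hcgpos, by rw [← sub_eq_zero]; exact hhne⟩
  · exfalso
    have hh0 : 0 ≤ g - cg • fbar := sub_nonneg.mpr hcgle
    obtain ⟨q, hq1, hhq⟩ := hesp _ ((Lp.coeFn_nonneg _).mpr hh0) hhne
    obtain ⟨δ₂, hδ₂, hδ₂ae⟩ := (essInf_pos_iff hμ _).mp hhq
    have hTqh : (T ^ q) (g - cg • fbar) = (lam1 ^ q) • (g - cg • fbar) := by
      rw [map_sub, ContinuousLinearMap.map_smul, hTkg, hTkfbar, hbeq, smul_sub,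
        smul_smul, smul_smul, mul_comm cg (lam1 ^ q)]
    have h5 : δ₂ • one μ ≤ (lam1 ^ q) • (g - cg • fbar) := by
      rw [← hTqh]
      exact smul_one_le_iff.mpr hδ₂ae
    have h6 : (δ₂ / lam1 ^ q) • one μ ≤ g - cg • fbar :=
      smul_one_le_smul (pow_pos hlam1pos _) h5
    have h7 : ((δ₂ / lam1 ^ q) / β) • fbar ≤ g - cg • fbar := by
      calc ((δ₂ / lam1 ^ q) / β) • fbar
          ≤ ((δ₂ / lam1 ^ q) / β) • (β • one μ) :=
            smul_mono (div_nonneg (div_nonneg hδ₂.le (pow_pos hlam1pos q).le) hβpos.le)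
              hfbarle
        _ = (δ₂ / lam1 ^ q) • one μ := by
            rw [smul_smul, div_mul_cancel₀ _ hβpos.ne']
        _ ≤ g - cg • fbar := h6
    have h8 : (cg + (δ₂ / lam1 ^ q) / β) • fbar ≤ g := by
      calc (cg + (δ₂ / lam1 ^ q) / β) • fbar
          = cg • fbar + ((δ₂ / lam1 ^ q) / β) • fbar := add_smul _ _ _
        _ ≤ cg • fbar + (g - cg • fbar) := add_le_add_right h7 _
        _ = g := by abel
    have h10 := le_csSup hΓbdd (show cg + (δ₂ / lam1 ^ q) / β ∈ Γ from h8)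
    rw [← hcgdef] at h10
    have h11 : 0 < (δ₂ / lam1 ^ q) / β :=
      div_pos (div_pos hδ₂ (pow_pos hlam1pos q)) hβpos
    linarith
end

section
/- Let $\{X_t\}$ be a strictly stationary first-order Markov process with stationary distribution $Q$ on $(\mathcal X, \mathscr X)$, and let $T_n \psi(x) = \mathbb E[(\prod_{s=0}^{n-1} m(X_{t+s},X_{t+s+1},Y_{t+s+1}))\psi(X_{t+n}) \mid X_t = x]$ be positive pricing operators with $T_n = T^n$. Suppose: (a) for every $S \in \mathscr X$ with $Q(S) > 0$ there is $n \ge 1$ such that $\Pr(X_{t+n} \in S \mid X_t = x) > 0$ a.e.-$[Q]$; and (b) for each non-negative nonzero $\psi \in L^p(Q)$ and each $n$, $\mathbb E[\psi(X_{t+n}) \mid X_t = x] > 0$ a.e.-$[Q]$ implies $T_n \psi(x) > 0$ a.e.-$[Q]$. Then $T$ satisfies eventual strong positivity: for each nonzero non-negative $\psi \in L^p(Q)$ there exists $n \ge 1$ with $T^n \psi > 0$ a.e.-$[Q]$. -/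
open MeasureTheory ProbabilityTheory
open scoped ENNReal

/-- Lemma 1: irreducibility of the state process (a) and the no-arbitrage
condition (b) imply eventual strong positivity of the pricing operator `T`.  The `n`-step
transition of the stationary Markov state process is modelled by kernels `κ n`, with `Q` the
stationary distribution and `T_n = T ^ n` the pricing operators. -/
theorem stmt5 {X : Type*} [MeasurableSpace X] (Q : Measure X) [IsProbabilityMeasure Q]
    {p : ℝ≥0∞} [Fact (1 ≤ p)] (hp : p ≠ ∞)
    (κ : ℕ → Kernel X X) (hκQ : ∀ n, ∀ᵐ x ∂Q, κ n x ≪ Q)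
    (hstat : ∀ n, Q.bind (κ n) = Q)
    (T : Lp ℝ p Q →L[ℝ] Lp ℝ p Q)
    (hpos : ∀ ψ : Lp ℝ p Q, 0 ≤ᵐ[Q] ⇑ψ → 0 ≤ᵐ[Q] ⇑(T ψ))
    -- (a) irreducibility / weak dependence:
    (ha : ∀ S : Set X, MeasurableSet S → 0 < Q S →
      ∃ n : ℕ, 1 ≤ n ∧ ∀ᵐ x ∂Q, 0 < κ n x S)
    -- (b) no arbitrage: positive conditional expected payoff implies positive price:
    (hb : ∀ ψ : Lp ℝ p Q, 0 ≤ᵐ[Q] ⇑ψ → ψ ≠ 0 → ∀ n : ℕ, 1 ≤ n →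
      (∀ᵐ x ∂Q, 0 < ∫⁻ y, ENNReal.ofReal (ψ y) ∂(κ n x)) →
      ∀ᵐ x ∂Q, 0 < ((T ^ n) ψ : Lp ℝ p Q) x) :
    -- eventual strong positivity:
    ∀ ψ : Lp ℝ p Q, 0 ≤ᵐ[Q] ⇑ψ → ψ ≠ 0 →
      ∃ n : ℕ, 1 ≤ n ∧ ∀ᵐ x ∂Q, 0 < ((T ^ n) ψ : Lp ℝ p Q) x := by
  intro ψ hψ0 hψne
  have hsm : StronglyMeasurable ψ := Lp.stronglyMeasurable ψ
  have hm : Measurable ψ := hsm.measurable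
  set S : Set X := {x | 0 < ψ x} with hSdef
  have hS : MeasurableSet S := measurableSet_lt measurable_const hm
  have hQS : 0 < Q S := by
    rcases (zero_le : (0 : ℝ≥0∞) ≤ Q S).lt_or_eq with h | h
    · exact h
    · exfalso
      apply hψne
      rw [Lp.eq_zero_iff_ae_eq_zero]
      have hnm : ∀ᵐ x ∂Q, x ∉ S := by
        rw [ae_iff]
        simpa using h.symm
      filter_upwards [hψ0, hnm] with x hx hxS
      simp only [hSdef, Set.mem_setOf_eq, not_lt] at hxS
      exact le_antisymm hxS hx
  obtain ⟨n, hn1, hn⟩ := ha S hS hQS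
  refine ⟨n, hn1, hb ψ hψ0 hψne n hn1 ?_⟩
  filter_upwards [hn] with x hx
  have hmo : Measurable (fun y => ENNReal.ofReal (ψ y)) :=
    ENNReal.measurable_ofReal.comp hm
  rw [lintegral_pos_iff_support hmo]
  refine lt_of_lt_of_le hx (measure_mono ?_)
  intro y hy
  exact (ENNReal.ofReal_pos.mpr hy).ne'
end
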